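/- arXiv:0910.2691 — 4 statements merged into one kernel-verified Lean document; each statement's English description precedes it below -/
import Mathlib

section
/- Let L(z) = K(z-1)^6 (z-a)^3 (z-b) / z^5 where K = (11+5√5)/216, a = (-3+√5)/2, b = (7-3√5)/2, viewed as a Laurent polynomial over ℂ. Let Q_2 = -(9+4√5)z^2 + (20+8√5)z + z^{-2}. Then ∮_{S^1} L(z)^i Q_2'(z) dz = 0 for all integers i ≥ 0. -/
/-- `L(z) = K (z-1)^6 (z-a)^3 (z-b) / z^5` with `K = (11+5√5)/216`, `a = (-3+√5)/2`,
`b = (7-3√5)/2`, as an analytic function on `ℂ \ {0}`. -/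
noncomputable def Lfun (z : ℂ) : ℂ :=
  ((11 + 5 * (Real.sqrt 5 : ℂ)) / 216) * (z - 1) ^ 6 *
    (z - ((-3 + (Real.sqrt 5 : ℂ)) / 2)) ^ 3 * (z - ((7 - 3 * (Real.sqrt 5 : ℂ)) / 2)) / z ^ 5

/-- The Laurent polynomial `Q_2 = -(9+4√5)z² + (20+8√5)z + z⁻²`. -/
noncomputable def Q2fun (z : ℂ) : ℂ :=
  -(9 + 4 * (Real.sqrt 5 : ℂ)) * z ^ 2 + (20 + 8 * (Real.sqrt 5 : ℂ)) * z + (z ^ 2)⁻¹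

open Metric Real Set

local notation "S5" => ((Real.sqrt 5 : ℝ) : ℂ)

private lemma hs5 : S5 ^ 2 = 5 := by
  rw [← Complex.ofReal_pow, Real.sq_sqrt (by norm_num : (0:ℝ) ≤ 5)]
  norm_num

noncomputable def Pf (z : ℂ) : ℂ := ((((11 : ℂ)/216) + ((5 : ℂ)/216) * S5)) * z ^ 10 + ((((-55 : ℂ)/216) + ((-25 : ℂ)/216) * S5)) * z ^ 9 + ((((35 : ℂ)/72) + ((5 : ℂ)/24) * S5)) * z ^ 8 + ((((-10 : ℂ)/27) + ((-5 : ℂ)/36) * S5)) * z ^ 7 + ((((-5 : ℂ)/54))) * z ^ 6 + ((((13 : ℂ)/36))) * z ^ 5 + ((((-5 : ℂ)/54))) * z ^ 4 + ((((-10 : ℂ)/27) + ((5 : ℂ)/36) * S5)) * z ^ 3 + ((((35 : ℂ)/72) + ((-5 : ℂ)/24) * S5)) * z ^ 2 + ((((-55 : ℂ)/216) + ((25 : ℂ)/216) * S5)) * z + ((((11 : ℂ)/216) + ((-5 : ℂ)/216) * S5))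

noncomputable def dPf (z : ℂ) : ℂ := ((((55 : ℂ)/108) + ((25 : ℂ)/108) * S5)) * z ^ 9 + ((((-55 : ℂ)/24) + ((-25 : ℂ)/24) * S5)) * z ^ 8 + ((((35 : ℂ)/9) + ((5 : ℂ)/3) * S5)) * z ^ 7 + ((((-70 : ℂ)/27) + ((-35 : ℂ)/36) * S5)) * z ^ 6 + ((((-5 : ℂ)/9))) * z ^ 5 + ((((65 : ℂ)/36))) * z ^ 4 + ((((-10 : ℂ)/27))) * z ^ 3 + ((((-10 : ℂ)/9) + ((5 : ℂ)/12) * S5)) * z ^ 2 + ((((35 : ℂ)/36) + ((-5 : ℂ)/12) * S5)) * z + ((((-55 : ℂ)/216) + ((25 : ℂ)/216) * S5))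

noncomputable def NAf (z : ℂ) : ℂ := -(9 + 4 * S5) * (2 * z ^ 4) + (20 + 8 * S5) * z ^ 3 - 2

noncomputable def AF (z : ℂ) : ℂ :=
  -(9 + 4 * S5) * (((2:ℕ):ℂ) * z ^ (2 - 1)) + (20 + 8 * S5) * 1 +
    -(((2:ℕ):ℂ) * z ^ (2 - 1)) / (z ^ 2) ^ 2

noncomputable def DLF (z : ℂ) : ℂ :=
  dPf z * (z ^ 5)⁻¹ + Pf z * (-(((5:ℕ):ℂ) * z ^ (5 - 1)) / (z ^ 5) ^ 2)

noncomputable def NCf (k z : ℂ) : ℂ := (((504 : ℂ) + (-72 : ℂ) * S5) + ((3330 : ℂ) + (-270 : ℂ) * S5) * k + ((7675 : ℂ) + (-325 : ℂ) * S5) * k ^ 2 + ((7375 : ℂ) + (-125 : ℂ) * S5) * k ^ 3 + ((2500 : ℂ)) * k ^ 4) * z ^ 14 + (((-10500 : ℂ) + (3612 : ℂ) * S5) + ((-63745 : ℂ) + (19895 : ℂ) * S5) * k + ((-137675 : ℂ) + (39625 : ℂ) * S5) * k ^ 2 + ((-125000 : ℂ) + (33500 : ℂ) * S5) * k ^ 3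 + ((-40000 : ℂ) + (10000 : ℂ) * S5) * k ^ 4) * z ^ 13 + (((36288 : ℂ) + (-13104 : ℂ) * S5) + ((216780 : ℂ) + (-72120 : ℂ) * S5) * k + ((459775 : ℂ) + (-142375 : ℂ) * S5) * k ^ 2 + ((407875 : ℂ) + (-117875 : ℂ) * S5) * k ^ 3 + ((126250 : ℂ) + (-33750 : ℂ) * S5) * k ^ 4) * z ^ 12 + (((304290 : ℂ) + (-140490 : ℂ) * S5) + ((1731300 : ℂ) + (-809310 : ℂ) * S5) * k + ((3524050 : ℂ) + (-1665400 : ℂ) * S5) * k ^ 2 + ((3023500 : ℂ) + (-1443500 : ℂ) * S5) * k ^ 3 + ((917500 : ℂ) + (-442500 : ℂ) * S5) * k ^ 4) * z ^ 11 + (((-950376 : ℂ) + (427224 : ℂ) * S5) + ((-5440380 : ℂ) + (2450840 : ℂ) * S5) * k + ((-11093925 : ℂ) + (5008025 : ℂ) * S5) * k ^ 2 + ((-9469125 : ℂ) + (4283625 : ℂ) * S5) * k ^ 3 + ((-2831250 : ℂ) + (1283750 : ℂ) * S5) * k ^ 4) * z ^ 10 + (((-2446458 : ℂ) + (1092594 :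 ℂ) * S5) + ((-14163375 : ℂ) + (6328605 : ℂ) * S5) * k + ((-28993625 : ℂ) + (12959375 : ℂ) * S5) * k ^ 2 + ((-24805250 : ℂ) + (11089750 : ℂ) * S5) * k ^ 3 + ((-7497500 : ℂ) + (3352500 : ℂ) * S5) * k ^ 4) * z ^ 9 + (((-4714680 : ℂ) + (2111976 : ℂ) * S5) + ((-20816130 : ℂ) + (9324870 : ℂ) * S5) * k + ((-30755500 : ℂ) + (13778350 : ℂ) * S5) * k ^ 2 + ((-17398000 : ℂ) + (7795250 : ℂ) * S5) * k ^ 3 + ((-2953750 : ℂ) + (1323750 : ℂ) * S5) * k ^ 4) * z ^ 8 + (((-2167476 : ℂ) + (967908 : ℂ) * S5) + ((-9082285 : ℂ) + (4054065 : ℂ) * S5) * k + ((-13548175 : ℂ) + (6044875 : ℂ) * S5) * k ^ 2 + ((-8351500 : ℂ) + (3724500 : ℂ) * S5) * k ^ 3 + ((-1560000 : ℂ) + (695000 : ℂ) * S5) * k ^ 4) * z ^ 7 + (((33982200 : ℂ) + (-15198120 : ℂ) * S5) + ((166025820 : ℂ) + (-74253120 : ℂ) * S5) * k + ((285084875 :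 ℂ) + (-127501325 : ℂ) * S5) * k ^ 2 + ((202792625 : ℂ) + (-90697375 : ℂ) * S5) * k ^ 3 + ((50090000 : ℂ) + (-22402500 : ℂ) * S5) * k ^ 4) * z ^ 6 + (((-27729498 : ℂ) + (12401202 : ℂ) * S5) + ((-135569850 : ℂ) + (60629760 : ℂ) * S5) * k + ((-230933000 : ℂ) + (103278350 : ℂ) * S5) * k ^ 2 + ((-161744000 : ℂ) + (72335500 : ℂ) * S5) * k ^ 3 + ((-39410000 : ℂ) + (17625000 : ℂ) * S5) * k ^ 4) * z ^ 5 + (((7589904 : ℂ) + (-3394272 : ℂ) * S5) + ((40460070 : ℂ) + (-18094010 : ℂ) * S5) * k + ((77212825 : ℂ) + (-34529925 : ℂ) * S5) * k ^ 2 + ((63778375 : ℂ) + (-28521875 : ℂ) * S5) * k ^ 3 + ((19993750 : ℂ) + (-8941250 : ℂ) * S5) * k ^ 4) * z ^ 4 + (((-9871470 : ℂ) + (4414662 : ℂ) * S5) + ((-59169225 : ℂ) + (26461335 : ℂ) * S5) * k + ((-128935325 : ℂ) + (57661775 : ℂ) * S5) * k ^ 2 + ((-121199000 : ℂ) + (54202000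 : ℂ) * S5) * k ^ 3 + ((-41607500 : ℂ) + (18607500 : ℂ) * S5) * k ^ 4) * z ^ 3 + (((9524088 : ℂ) + (-4259304 : ℂ) * S5) + ((56950530 : ℂ) + (-25469070 : ℂ) * S5) * k + ((123437275 : ℂ) + (-55202875 : ℂ) * S5) * k ^ 2 + ((114764125 : ℂ) + (-51324125 : ℂ) * S5) * k ^ 3 + ((38563750 : ℂ) + (-17246250 : ℂ) * S5) * k ^ 4) * z ^ 2 + (((-4280640 : ℂ) + (1914360 : ℂ) * S5) + ((-25423720 : ℂ) + (11369830 : ℂ) * S5) * k + ((-54600550 : ℂ) + (24418100 : ℂ) * S5) * k ^ 2 + ((-50128750 : ℂ) + (22418250 : ℂ) * S5) * k ^ 3 + ((-16552500 : ℂ) + (7402500 : ℂ) * S5) * k ^ 4) * z + (((733824 : ℂ) + (-328176 : ℂ) * S5) + ((4340880 : ℂ) + (-1941300 : ℂ) * S5) * k + ((9271300 : ℂ) + (-4146250 : ℂ) * S5) * k ^ 2 + ((8446750 : ℂ) + (-3777500 : ℂ) * S5) * k ^ 3 + ((2758750 : ℂ) + (-1233750 : ℂ) * S5) * k ^ 4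)

noncomputable def dNCf (k z : ℂ) : ℂ := (((7056 : ℂ) + (-1008 : ℂ) * S5) + ((46620 : ℂ) + (-3780 : ℂ) * S5) * k + ((107450 : ℂ) + (-4550 : ℂ) * S5) * k ^ 2 + ((103250 : ℂ) + (-1750 : ℂ) * S5) * k ^ 3 + ((35000 : ℂ)) * k ^ 4) * z ^ 13 + (((-136500 : ℂ) + (46956 : ℂ) * S5) + ((-828685 : ℂ) + (258635 : ℂ) * S5) * k + ((-1789775 : ℂ) + (515125 : ℂ) * S5) * k ^ 2 + ((-1625000 : ℂ) + (435500 : ℂ) * S5) * k ^ 3 + ((-520000 : ℂ) + (130000 : ℂ) * S5) * k ^ 4) * z ^ 12 + (((435456 : ℂ) + (-157248 : ℂ) * S5) + ((2601360 : ℂ) + (-865440 : ℂ) * S5) * k + ((5517300 : ℂ) + (-1708500 : ℂ) * S5) * k ^ 2 + ((4894500 : ℂ) + (-1414500 : ℂ) * S5) * k ^ 3 + ((1515000 : ℂ) + (-405000 : ℂ) * S5) * k ^ 4) * z ^ 11 + (((3347190 : ℂ) + (-1545390 : ℂ) * S5) + ((19044300 : ℂ) + (-8902410 : ℂ) * S5)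 * k + ((38764550 : ℂ) + (-18319400 : ℂ) * S5) * k ^ 2 + ((33258500 : ℂ) + (-15878500 : ℂ) * S5) * k ^ 3 + ((10092500 : ℂ) + (-4867500 : ℂ) * S5) * k ^ 4) * z ^ 10 + (((-9503760 : ℂ) + (4272240 : ℂ) * S5) + ((-54403800 : ℂ) + (24508400 : ℂ) * S5) * k + ((-110939250 : ℂ) + (50080250 : ℂ) * S5) * k ^ 2 + ((-94691250 : ℂ) + (42836250 : ℂ) * S5) * k ^ 3 + ((-28312500 : ℂ) + (12837500 : ℂ) * S5) * k ^ 4) * z ^ 9 + (((-22018122 : ℂ) + (9833346 : ℂ) * S5) + ((-127470375 : ℂ) + (56957445 : ℂ) * S5) * k + ((-260942625 : ℂ) + (116634375 : ℂ) * S5) * k ^ 2 + ((-223247250 : ℂ) + (99807750 : ℂ) * S5) * k ^ 3 + ((-67477500 : ℂ) + (30172500 : ℂ) * S5) * k ^ 4) * z ^ 8 + (((-37717440 : ℂ) + (16895808 : ℂ) * S5) + ((-166529040 : ℂ) + (74598960 : ℂ) * S5) * k + ((-246044000 : ℂ) + (110226800 : ℂ) * S5) * k ^ 2 + ((-139184000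 : ℂ) + (62362000 : ℂ) * S5) * k ^ 3 + ((-23630000 : ℂ) + (10590000 : ℂ) * S5) * k ^ 4) * z ^ 7 + (((-15172332 : ℂ) + (6775356 : ℂ) * S5) + ((-63575995 : ℂ) + (28378455 : ℂ) * S5) * k + ((-94837225 : ℂ) + (42314125 : ℂ) * S5) * k ^ 2 + ((-58460500 : ℂ) + (26071500 : ℂ) * S5) * k ^ 3 + ((-10920000 : ℂ) + (4865000 : ℂ) * S5) * k ^ 4) * z ^ 6 + (((203893200 : ℂ) + (-91188720 : ℂ) * S5) + ((996154920 : ℂ) + (-445518720 : ℂ) * S5) * k + ((1710509250 : ℂ) + (-765007950 : ℂ) * S5) * k ^ 2 + ((1216755750 : ℂ) + (-544184250 : ℂ) * S5) * k ^ 3 + ((300540000 : ℂ) + (-134415000 : ℂ) * S5) * k ^ 4) * z ^ 5 + (((-138647490 : ℂ) + (62006010 : ℂ) * S5) + ((-677849250 : ℂ) + (303148800 : ℂ) * S5) * k + ((-1154665000 : ℂ) + (516391750 : ℂ) * S5) * k ^ 2 + ((-808720000 : ℂ) + (361677500 : ℂ) * S5) * k ^ 3 + ((-197050000 : ℂ)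 + (88125000 : ℂ) * S5) * k ^ 4) * z ^ 4 + (((30359616 : ℂ) + (-13577088 : ℂ) * S5) + ((161840280 : ℂ) + (-72376040 : ℂ) * S5) * k + ((308851300 : ℂ) + (-138119700 : ℂ) * S5) * k ^ 2 + ((255113500 : ℂ) + (-114087500 : ℂ) * S5) * k ^ 3 + ((79975000 : ℂ) + (-35765000 : ℂ) * S5) * k ^ 4) * z ^ 3 + (((-29614410 : ℂ) + (13243986 : ℂ) * S5) + ((-177507675 : ℂ) + (79384005 : ℂ) * S5) * k + ((-386805975 : ℂ) + (172985325 : ℂ) * S5) * k ^ 2 + ((-363597000 : ℂ) + (162606000 : ℂ) * S5) * k ^ 3 + ((-124822500 : ℂ) + (55822500 : ℂ) * S5) * k ^ 4) * z ^ 2 + (((19048176 : ℂ) + (-8518608 : ℂ) * S5) + ((113901060 : ℂ) + (-50938140 : ℂ) * S5) * k + ((246874550 : ℂ) + (-110405750 : ℂ) * S5) * k ^ 2 + ((229528250 : ℂ) + (-102648250 : ℂ) * S5) * k ^ 3 + ((77127500 : ℂ) + (-34492500 : ℂ) * S5) * k ^ 4) * z + (((-4280640 : ℂ) + (1914360 :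 ℂ) * S5) + ((-25423720 : ℂ) + (11369830 : ℂ) * S5) * k + ((-54600550 : ℂ) + (24418100 : ℂ) * S5) * k ^ 2 + ((-50128750 : ℂ) + (22418250 : ℂ) * S5) * k ^ 3 + ((-16552500 : ℂ) + (7402500 : ℂ) * S5) * k ^ 4)

noncomputable def NPhi (z : ℂ) : ℂ := ((((-199 : ℂ)/756) + ((-89 : ℂ)/756) * S5)) * z ^ 14 + ((((1205 : ℂ)/648) + ((539 : ℂ)/648) * S5)) * z ^ 13 + ((((-193 : ℂ)/36) + ((-259 : ℂ)/108) * S5)) * z ^ 12 + ((((545 : ℂ)/72) + ((365 : ℂ)/108) * S5)) * z ^ 11 + ((((-1231 : ℂ)/324) + ((-545 : ℂ)/324) * S5)) * z ^ 10 + ((((-847 : ℂ)/216) + ((-367 : ℂ)/216) * S5)) * z ^ 9 + ((((95 : ℂ)/12) + ((347 : ℂ)/108) * S5)) * z ^ 8 + ((((25 : ℂ)/12) + ((35 : ℂ)/108) * S5)) * z ^ 6 + ((((-67 : ℂ)/216) + ((35 : ℂ)/216) * S5)) * z ^ 5 + ((((29 : ℂ)/324) + ((-31 : ℂ)/324) *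 S5)) * z ^ 4 + ((((-5 : ℂ)/24) + ((1 : ℂ)/12) * S5)) * z ^ 3 + ((((7 : ℂ)/36) + ((-1 : ℂ)/12) * S5)) * z ^ 2 + ((((-55 : ℂ)/648) + ((25 : ℂ)/648) * S5)) * z + ((((11 : ℂ)/756) + ((-5 : ℂ)/756) * S5))

noncomputable def dNPhi (z : ℂ) : ℂ := ((((-199 : ℂ)/54) + ((-89 : ℂ)/54) * S5)) * z ^ 13 + ((((15665 : ℂ)/648) + ((7007 : ℂ)/648) * S5)) * z ^ 12 + ((((-193 : ℂ)/3) + ((-259 : ℂ)/9) * S5)) * z ^ 11 + ((((5995 : ℂ)/72) + ((4015 : ℂ)/108) * S5)) * z ^ 10 + ((((-6155 : ℂ)/162) + ((-2725 : ℂ)/162) * S5)) * z ^ 9 + ((((-847 : ℂ)/24) + ((-367 : ℂ)/24) * S5)) * z ^ 8 + ((((190 : ℂ)/3) + ((694 : ℂ)/27) * S5)) * z ^ 7 + ((((25 : ℂ)/2) + ((35 : ℂ)/18) * S5)) * z ^ 5 + ((((-335 : ℂ)/216) + ((175 : ℂ)/216) * S5)) * z ^ 4 + ((((29 : ℂ)/81)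 + ((-31 : ℂ)/81) * S5)) * z ^ 3 + ((((-5 : ℂ)/8) + ((1 : ℂ)/4) * S5)) * z ^ 2 + ((((7 : ℂ)/18) + ((-1 : ℂ)/6) * S5)) * z + ((((-55 : ℂ)/648) + ((25 : ℂ)/648) * S5))

noncomputable def p0C (k : ℂ) : ℂ := ((-10908750 : ℂ) + (4878750 : ℂ) * S5) + ((-89278125 : ℂ) + (39928125 : ℂ) * S5) * k + ((-274143750 : ℂ) + (122606250 : ℂ) * S5) * k ^ 2 + ((-394696875 : ℂ) + (176521875 : ℂ) * S5) * k ^ 3 + ((-266085000 : ℂ) + (119002500 : ℂ) * S5) * k ^ 4 + ((-67162500 : ℂ) + (30037500 : ℂ) * S5) * k ^ 5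

noncomputable def p1C (k : ℂ) : ℂ := ((25011504 : ℂ) + (-11185776 : ℂ) * S5) + ((165818340 : ℂ) + (-74158740 : ℂ) * S5) * k + ((421679250 : ℂ) + (-188588250 : ℂ) * S5) * k ^ 2 + ((513607500 : ℂ) + (-229702500 : ℂ) * S5) * k ^ 3 + ((299666250 : ℂ) + (-134021250 : ℂ) * S5) * k ^ 4 + ((67162500 : ℂ) + (-30037500 : ℂ) * S5) * k ^ 5

private lemma Lfun_eq {z : ℂ} (hz : z ≠ 0) : Lfun z = Pf z * (z ^ 5)⁻¹ := by
  unfold Lfun Pf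
  rw [div_eq_mul_inv]
  linear_combination ((z ^ 5)⁻¹ * (((451 : ℂ)/3456) + ((-979 : ℂ)/1728) * z + ((871 : ℂ)/1152) * z ^ 2 + ((23 : ℂ)/432) * z ^ 3 + ((-3155 : ℂ)/3456) * z ^ 4 + ((299 : ℂ)/576) * z ^ 5 + ((1003 : ℂ)/3456) * z ^ 6 + ((-317 : ℂ)/864) * z ^ 7 + ((7 : ℂ)/72) * z ^ 8 + ((-421 : ℂ)/3456) * S5 + ((1021 : ℂ)/1728) * S5 * z + ((-1177 : ℂ)/1152) * S5 * z ^ 2 + ((235 : ℂ)/432) * S5 * z ^ 3 + ((1565 : ℂ)/3456) * S5 * z ^ 4 + ((-389 : ℂ)/576) * S5 * z ^ 5 + ((683 : ℂ)/3456) * S5 * z ^ 6 + ((59 : ℂ)/864) * S5 * z ^ 7 + ((-5 : ℂ)/144) * S5 * z ^ 8 + ((137 : ℂ)/3456) * S5 ^ 2 + ((-371 : ℂ)/1728) * S5 ^ 2 * z + ((175 : ℂ)/384) * S5 ^ 2 * z ^ 2 + ((-385 : ℂ)/864) * S5 ^ 2 * z ^ 3 + ((455 : ℂ)/3456) * S5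 ^ 2 * z ^ 4 + ((7 : ℂ)/64) * S5 ^ 2 * z ^ 5 + ((-343 : ℂ)/3456) * S5 ^ 2 * z ^ 6 + ((5 : ℂ)/216) * S5 ^ 2 * z ^ 7 + ((-5 : ℂ)/1152) * S5 ^ 3 + ((5 : ℂ)/192) * S5 ^ 3 * z + ((-25 : ℂ)/384) * S5 ^ 3 * z ^ 2 + ((25 : ℂ)/288) * S5 ^ 3 * z ^ 3 + ((-25 : ℂ)/384) * S5 ^ 3 * z ^ 4 + ((5 : ℂ)/192) * S5 ^ 3 * z ^ 5 + ((-5 : ℂ)/1152) * S5 ^ 3 * z ^ 6)) * hs5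

private lemma hQ2 {z : ℂ} (hz : z ≠ 0) : HasDerivAt Q2fun (AF z) z := by
  unfold Q2fun AF
  exact ((HasDerivAt.const_mul (-(9 + 4 * S5)) (hasDerivAt_pow 2 z)).add
    (HasDerivAt.const_mul (20 + 8 * S5) (hasDerivAt_id z))).add
      ((hasDerivAt_pow 2 z).inv (pow_ne_zero 2 hz))

private lemma hPf (z : ℂ) : HasDerivAt Pf (dPf z) z := by
  unfold Pf dPf
  refine HasDerivAt.congr_deriv (((((((((((HasDerivAt.const_mul ((((11 : ℂ)/216) + ((5 : ℂ)/216) * S5)) (hasDerivAt_pow 10 z)).add (HasDerivAt.const_mul ((((-55 : ℂ)/216) + ((-25 : ℂ)/216) * S5)) (hasDerivAt_pow 9 z))).add (HasDerivAt.const_mul ((((35 : ℂ)/72) + ((5 : ℂ)/24) * S5)) (hasDerivAt_pow 8 z))).add (HasDerivAt.const_mul ((((-10 : ℂ)/27) + ((-5 : ℂ)/36) * S5)) (hasDerivAt_pow 7 z))).add (HasDerivAt.const_mul ((((-5 : ℂ)/54))) (hasDerivAt_pow 6 z))).add (HasDerivAt.const_mul ((((13 : ℂ)/36))) (hasDerivAt_pow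 5 z))).add (HasDerivAt.const_mul ((((-5 : ℂ)/54))) (hasDerivAt_pow 4 z))).add (HasDerivAt.const_mul ((((-10 : ℂ)/27) + ((5 : ℂ)/36) * S5)) (hasDerivAt_pow 3 z))).add (HasDerivAt.const_mul ((((35 : ℂ)/72) + ((-5 : ℂ)/24) * S5)) (hasDerivAt_pow 2 z))).add (HasDerivAt.const_mul ((((-55 : ℂ)/216) + ((25 : ℂ)/216) * S5)) (hasDerivAt_id z))).add_const ((((11 : ℂ)/216) + ((-5 : ℂ)/216) * S5))) ?_
  push_cast
  ring

private lemma hNCd (k z : ℂ) : HasDerivAt (fun z => NCf k z) (dNCf k z) z := by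
  unfold NCf dNCf
  refine HasDerivAt.congr_deriv (((((((((((((((HasDerivAt.const_mul (((504 : ℂ) + (-72 : ℂ) * S5) + ((3330 : ℂ) + (-270 : ℂ) * S5) * k + ((7675 : ℂ) + (-325 : ℂ) * S5) * k ^ 2 + ((7375 : ℂ) + (-125 : ℂ) * S5) * k ^ 3 + ((2500 : ℂ)) * k ^ 4) (hasDerivAt_pow 14 z)).add (HasDerivAt.const_mul (((-10500 : ℂ) + (3612 : ℂ) * S5) + ((-63745 : ℂ) + (19895 : ℂ) * S5) * k + ((-137675 : ℂ) + (39625 : ℂ) * S5) * k ^ 2 + ((-125000 : ℂ) + (33500 : ℂ) * S5) * k ^ 3 + ((-40000 : ℂ) + (10000 : ℂ) * S5) * k ^ 4) (hasDerivAt_pow 13 z))).add (HasDerivAt.const_mul (((36288 : ℂ) + (-13104 : ℂ) * S5) + ((216780 : ℂ) + (-72120 : ℂ) * S5) * k + ((459775 : ℂ) + (-142375 : ℂ) * S5) * k ^ 2 + ((407875 : ℂ) + (-117875 : ℂ) * S5) * k ^ 3 + ((126250 : ℂ) + (-33750 : ℂ) * S5) * k ^ 4) (hasDerivAt_pow 12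 z))).add (HasDerivAt.const_mul (((304290 : ℂ) + (-140490 : ℂ) * S5) + ((1731300 : ℂ) + (-809310 : ℂ) * S5) * k + ((3524050 : ℂ) + (-1665400 : ℂ) * S5) * k ^ 2 + ((3023500 : ℂ) + (-1443500 : ℂ) * S5) * k ^ 3 + ((917500 : ℂ) + (-442500 : ℂ) * S5) * k ^ 4) (hasDerivAt_pow 11 z))).add (HasDerivAt.const_mul (((-950376 : ℂ) + (427224 : ℂ) * S5) + ((-5440380 : ℂ) + (2450840 : ℂ) * S5) * k + ((-11093925 : ℂ) + (5008025 : ℂ) * S5) * k ^ 2 + ((-9469125 : ℂ) + (4283625 : ℂ) * S5) * k ^ 3 + ((-2831250 : ℂ) + (1283750 : ℂ) * S5) * k ^ 4) (hasDerivAt_pow 10 z))).add (HasDerivAt.const_mul (((-2446458 : ℂ) + (1092594 : ℂ) * S5) + ((-14163375 : ℂ) + (6328605 : ℂ) * S5) * k + ((-28993625 : ℂ) + (12959375 : ℂ) * S5) * k ^ 2 + ((-24805250 : ℂ) + (11089750 : ℂ) * S5) * k ^ 3 + ((-7497500 : ℂ) + (3352500 : ℂ) * S5) * k ^ 4) (hasDerivAt_pow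 9 z))).add (HasDerivAt.const_mul (((-4714680 : ℂ) + (2111976 : ℂ) * S5) + ((-20816130 : ℂ) + (9324870 : ℂ) * S5) * k + ((-30755500 : ℂ) + (13778350 : ℂ) * S5) * k ^ 2 + ((-17398000 : ℂ) + (7795250 : ℂ) * S5) * k ^ 3 + ((-2953750 : ℂ) + (1323750 : ℂ) * S5) * k ^ 4) (hasDerivAt_pow 8 z))).add (HasDerivAt.const_mul (((-2167476 : ℂ) + (967908 : ℂ) * S5) + ((-9082285 : ℂ) + (4054065 : ℂ) * S5) * k + ((-13548175 : ℂ) + (6044875 : ℂ) * S5) * k ^ 2 + ((-8351500 : ℂ) + (3724500 : ℂ) * S5) * k ^ 3 + ((-1560000 : ℂ) + (695000 : ℂ) * S5) * k ^ 4) (hasDerivAt_pow 7 z))).add (HasDerivAt.const_mul (((33982200 : ℂ) + (-15198120 : ℂ) * S5) + ((166025820 : ℂ) + (-74253120 : ℂ) * S5) * k + ((285084875 : ℂ) + (-127501325 : ℂ) * S5) * k ^ 2 + ((202792625 : ℂ) + (-90697375 : ℂ) * S5) * k ^ 3 + ((50090000 : ℂ) + (-22402500 : ℂ) * S5) * k ^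 4) (hasDerivAt_pow 6 z))).add (HasDerivAt.const_mul (((-27729498 : ℂ) + (12401202 : ℂ) * S5) + ((-135569850 : ℂ) + (60629760 : ℂ) * S5) * k + ((-230933000 : ℂ) + (103278350 : ℂ) * S5) * k ^ 2 + ((-161744000 : ℂ) + (72335500 : ℂ) * S5) * k ^ 3 + ((-39410000 : ℂ) + (17625000 : ℂ) * S5) * k ^ 4) (hasDerivAt_pow 5 z))).add (HasDerivAt.const_mul (((7589904 : ℂ) + (-3394272 : ℂ) * S5) + ((40460070 : ℂ) + (-18094010 : ℂ) * S5) * k + ((77212825 : ℂ) + (-34529925 : ℂ) * S5) * k ^ 2 + ((63778375 : ℂ) + (-28521875 : ℂ) * S5) * k ^ 3 + ((19993750 : ℂ) + (-8941250 : ℂ) * S5) * k ^ 4) (hasDerivAt_pow 4 z))).add (HasDerivAt.const_mul (((-9871470 : ℂ) + (4414662 : ℂ) * S5) + ((-59169225 : ℂ) + (26461335 : ℂ) * S5) * k + ((-128935325 : ℂ) + (57661775 : ℂ) * S5) * k ^ 2 + ((-121199000 : ℂ) + (54202000 : ℂ) * S5) * k ^ 3 + ((-41607500 : ℂ) + (18607500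 : ℂ) * S5) * k ^ 4) (hasDerivAt_pow 3 z))).add (HasDerivAt.const_mul (((9524088 : ℂ) + (-4259304 : ℂ) * S5) + ((56950530 : ℂ) + (-25469070 : ℂ) * S5) * k + ((123437275 : ℂ) + (-55202875 : ℂ) * S5) * k ^ 2 + ((114764125 : ℂ) + (-51324125 : ℂ) * S5) * k ^ 3 + ((38563750 : ℂ) + (-17246250 : ℂ) * S5) * k ^ 4) (hasDerivAt_pow 2 z))).add (HasDerivAt.const_mul (((-4280640 : ℂ) + (1914360 : ℂ) * S5) + ((-25423720 : ℂ) + (11369830 : ℂ) * S5) * k + ((-54600550 : ℂ) + (24418100 : ℂ) * S5) * k ^ 2 + ((-50128750 : ℂ) + (22418250 : ℂ) * S5) * k ^ 3 + ((-16552500 : ℂ) + (7402500 : ℂ) * S5) * k ^ 4) (hasDerivAt_id z))).add_const (((733824 : ℂ) + (-328176 : ℂ) * S5) + ((4340880 : ℂ) + (-1941300 : ℂ) * S5) * k + ((9271300 : ℂ) + (-4146250 : ℂ) * S5) * k ^ 2 + ((8446750 : ℂ) + (-3777500 : ℂ) * S5) * k ^ 3 + ((2758750 : ℂ) + (-1233750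 : ℂ) * S5) * k ^ 4)) ?_
  push_cast
  ring

private lemma hNPhid (z : ℂ) : HasDerivAt NPhi (dNPhi z) z := by
  unfold NPhi dNPhi
  refine HasDerivAt.congr_deriv ((((((((((((((HasDerivAt.const_mul ((((-199 : ℂ)/756) + ((-89 : ℂ)/756) * S5)) (hasDerivAt_pow 14 z)).add (HasDerivAt.const_mul ((((1205 : ℂ)/648) + ((539 : ℂ)/648) * S5)) (hasDerivAt_pow 13 z))).add (HasDerivAt.const_mul ((((-193 : ℂ)/36) + ((-259 : ℂ)/108) * S5)) (hasDerivAt_pow 12 z))).add (HasDerivAt.const_mul ((((545 : ℂ)/72) + ((365 : ℂ)/108) * S5)) (hasDerivAt_pow 11 z))).add (HasDerivAt.const_mul ((((-1231 : ℂ)/324) + ((-545 : ℂ)/324) * S5)) (hasDerivAt_pow 10 z))).add (HasDerivAt.const_mul ((((-847 : ℂ)/216) + ((-367 : ℂ)/216) * S5)) (hasDerivAt_pow 9 z))).add (HasDerivAt.const_mul ((((95 : ℂ)/12) + ((347 : ℂ)/108) * S5)) (hasDerivAt_pow 8 z))).add (HasDerivAt.const_mul ((((25 : ℂ)/12) + ((35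 : ℂ)/108) * S5)) (hasDerivAt_pow 6 z))).add (HasDerivAt.const_mul ((((-67 : ℂ)/216) + ((35 : ℂ)/216) * S5)) (hasDerivAt_pow 5 z))).add (HasDerivAt.const_mul ((((29 : ℂ)/324) + ((-31 : ℂ)/324) * S5)) (hasDerivAt_pow 4 z))).add (HasDerivAt.const_mul ((((-5 : ℂ)/24) + ((1 : ℂ)/12) * S5)) (hasDerivAt_pow 3 z))).add (HasDerivAt.const_mul ((((7 : ℂ)/36) + ((-1 : ℂ)/12) * S5)) (hasDerivAt_pow 2 z))).add (HasDerivAt.const_mul ((((-55 : ℂ)/648) + ((25 : ℂ)/648) * S5)) (hasDerivAt_id z))).add_const ((((11 : ℂ)/756) + ((-5 : ℂ)/756) * S5))) ?_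
  push_cast
  ring

private lemma hLf {z : ℂ} (hz : z ≠ 0) : HasDerivAt Lfun (DLF z) z := by
  have h : HasDerivAt (fun w : ℂ => Pf w * (w ^ 5)⁻¹) (DLF z) z := by
    unfold DLF
    exact (hPf z).mul ((hasDerivAt_pow 5 z).inv (pow_ne_zero 5 hz))
  apply h.congr_of_eventuallyEq
  filter_upwards [IsOpen.mem_nhds isOpen_ne hz] with w hw
  exact Lfun_eq hw

private lemma hAF {z : ℂ} (hz : z ≠ 0) : AF z = NAf z * z⁻¹ ^ 3 := by
  have hzw : z * z⁻¹ = 1 := mul_inv_cancel₀ hz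
  unfold AF NAf
  push_cast
  linear_combination ((-20 : ℂ) + (-2 : ℂ) * z⁻¹ ^ 3 + (18 : ℂ) * z + (-20 : ℂ) * z * z⁻¹ + (18 : ℂ) * z ^ 2 * z⁻¹ + (-20 : ℂ) * z ^ 2 * z⁻¹ ^ 2 + (18 : ℂ) * z ^ 3 * z⁻¹ ^ 2 + (-8 : ℂ) * S5 + (8 : ℂ) * S5 * z + (-8 : ℂ) * S5 * z * z⁻¹ + (8 : ℂ) * S5 * z ^ 2 * z⁻¹ + (-8 : ℂ) * S5 * z ^ 2 * z⁻¹ ^ 2 + (8 : ℂ) * S5 * z ^ 3 * z⁻¹ ^ 2) * hzw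

private lemma certPoly (k z : ℂ) :
    p0C k * (NAf z * Pf z * z ^ 5) + p1C k * (NAf z * Pf z ^ 2)
      = (z * dNCf k z - 7 * NCf k z) * Pf z + k * NCf k z * (z * dPf z - 5 * Pf z) := by
  unfold p0C p1C NAf Pf dPf NCf dNCf
  linear_combination (((-52745 : ℂ)/2) + ((-4196225 : ℂ)/24) * k + ((-64026875 : ℂ)/144) * k ^ 2 + ((-116978125 : ℂ)/216) * k ^ 3 + ((-136503125 : ℂ)/432) * k ^ 4 + ((-15296875 : ℂ)/216) * k ^ 5 + (263725 : ℂ) * z + ((20981125 : ℂ)/12) * k * z + ((320134375 : ℂ)/72) * k ^ 2 * z + ((584890625 : ℂ)/108) * k ^ 3 * z + ((682515625 : ℂ)/216) * k ^ 4 * z + ((76484375 : ℂ)/108) * k ^ 5 * z + ((-2296805 : ℂ)/2) * z ^ 2 + ((-182627885 : ℂ)/24) * k * z ^ 2 + ((-2784578375 : ℂ)/144) * k ^ 2 * z ^ 2 + ((-5082649375 : ℂ)/216) * k ^ 3 * z ^ 2 + ((-5923653125 : ℂ)/432) * k ^ 4 * z ^ 2 + ((-662771875 : ℂ)/216) * k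 ^ 5 * z ^ 2 + ((7773766 : ℂ)/3) * z ^ 3 + ((102907595 : ℂ)/6) * k * z ^ 3 + ((2350134175 : ℂ)/54) * k ^ 2 * z ^ 3 + ((951378875 : ℂ)/18) * k ^ 3 * z ^ 3 + ((184313125 : ℂ)/6) * k ^ 4 * z ^ 3 + ((184956250 : ℂ)/27) * k ^ 5 * z ^ 3 + ((-5084891 : ℂ)/3) * z ^ 4 + ((-44792335 : ℂ)/4) * k * z ^ 4 + ((-6121685375 : ℂ)/216) * k ^ 2 * z ^ 4 + ((-3703503875 : ℂ)/108) * k ^ 3 * z ^ 4 + ((-4281934375 : ℂ)/216) * k ^ 4 * z ^ 4 + ((-473715625 : ℂ)/108) * k ^ 5 * z ^ 4 + ((-25548040 : ℂ)/3) * z ^ 5 + ((-112528545 : ℂ)/2) * k * z ^ 5 + ((-3845583350 : ℂ)/27) * k ^ 2 * z ^ 5 + ((-9311589125 : ℂ)/54) * k ^ 3 * z ^ 5 + ((-2695256875 : ℂ)/27) * k ^ 4 * z ^ 5 + ((-598184375 : ℂ)/27) * k ^ 5 * z ^ 5 + ((198051875 : ℂ)/6) * z ^ 6 + ((5232097085 :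 ℂ)/24) * k * z ^ 6 + ((238255205525 : ℂ)/432) * k ^ 2 * z ^ 6 + ((144073560125 : ℂ)/216) * k ^ 3 * z ^ 6 + ((166512480625 : ℂ)/432) * k ^ 4 * z ^ 6 + ((18422659375 : ℂ)/216) * k ^ 5 * z ^ 6 + ((-181618780 : ℂ)/3) * z ^ 7 + ((-1201379975 : ℂ)/3) * k * z ^ 7 + ((-109626608225 : ℂ)/108) * k ^ 2 * z ^ 7 + ((-11074615375 : ℂ)/9) * k ^ 3 * z ^ 7 + ((-25670239375 : ℂ)/36) * k ^ 4 * z ^ 7 + ((-8546140625 : ℂ)/54) * k ^ 5 * z ^ 7 + ((1117112251 : ℂ)/18) * z ^ 8 + ((29934942145 : ℂ)/72) * k * z ^ 8 + ((462178833575 : ℂ)/432) * k ^ 2 * z ^ 8 + ((31688410375 : ℂ)/24) * k ^ 3 * z ^ 8 + ((112511110625 : ℂ)/144) * k ^ 4 * z ^ 8 + ((38361153125 : ℂ)/216) * k ^ 5 * z ^ 8 + ((-71033476 : ℂ)/3) * z ^ 9 + ((-1078391225 : ℂ)/6) * k * z ^ 9 + ((-18894393475 : ℂ)/36) * k ^ 2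 * z ^ 9 + ((-39693483875 : ℂ)/54) * k ^ 3 * z ^ 9 + ((-53191155625 : ℂ)/108) * k ^ 4 * z ^ 9 + ((-6810021875 : ℂ)/54) * k ^ 5 * z ^ 9 + ((-182290475 : ℂ)/9) * z ^ 10 + ((-3022160945 : ℂ)/36) * k * z ^ 10 + ((-14055114625 : ℂ)/216) * k ^ 2 * z ^ 10 + ((2297963375 : ℂ)/18) * k ^ 3 * z ^ 10 + ((15113779375 : ℂ)/72) * k ^ 4 * z ^ 10 + ((8663796875 : ℂ)/108) * k ^ 5 * z ^ 10 + ((119844100 : ℂ)/9) * z ^ 11 + ((493104365 : ℂ)/18) * k * z ^ 11 + ((-5754620075 : ℂ)/54) * k ^ 2 * z ^ 11 + ((-6661644875 : ℂ)/18) * k ^ 3 * z ^ 11 + ((-6654641875 : ℂ)/18) * k ^ 4 * z ^ 11 + ((-3239253125 : ℂ)/27) * k ^ 5 * z ^ 11 + (56173620 : ℂ) * z ^ 12 + (409662290 : ℂ) * k * z ^ 12 + ((30877290575 : ℂ)/27) * k ^ 2 * z ^ 12 + ((82262286875 : ℂ)/54) * k ^ 3 * z ^ 12 + ((52266093125 :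 ℂ)/54) * k ^ 4 * z ^ 12 + ((6361934375 : ℂ)/27) * k ^ 5 * z ^ 12 + ((-1158943702 : ℂ)/9) * z ^ 13 + ((-7716776500 : ℂ)/9) * k * z ^ 13 + ((-39242072275 : ℂ)/18) * k ^ 2 * z ^ 13 + (-2640720000 : ℂ) * k ^ 3 * z ^ 13 + ((-27441336875 : ℂ)/18) * k ^ 4 * z ^ 13 + ((-3035884375 : ℂ)/9) * k ^ 5 * z ^ 13 + ((1176162547 : ℂ)/9) * z ^ 14 + ((31222003915 : ℂ)/36) * k * z ^ 14 + ((158131194775 : ℂ)/72) * k ^ 2 * z ^ 14 + ((7942775875 : ℂ)/3) * k ^ 3 * z ^ 14 + ((109400348125 : ℂ)/72) * k ^ 4 * z ^ 14 + ((4000090625 : ℂ)/12) * k ^ 5 * z ^ 14 + ((-176490010 : ℂ)/3) * z ^ 15 + ((-845356185 : ℂ)/2) * k * z ^ 15 + ((-31306255450 : ℂ)/27) * k ^ 2 * z ^ 15 + ((-81743986625 : ℂ)/54) * k ^ 3 * z ^ 15 + ((-25340650000 : ℂ)/27) * k ^ 4 * z ^ 15 + ((-1988506250 : ℂ)/9)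 * k ^ 5 * z ^ 15 + ((-239284475 : ℂ)/18) * z ^ 16 + ((-2173902185 : ℂ)/72) * k * z ^ 16 + ((35927845625 : ℂ)/432) * k ^ 2 * z ^ 16 + ((22088313875 : ℂ)/72) * k ^ 3 * z ^ 16 + ((4793884375 : ℂ)/16) * k ^ 4 * z ^ 16 + ((19958871875 : ℂ)/216) * k ^ 5 * z ^ 16 + ((181555475 : ℂ)/9) * z ^ 17 + ((3123187655 : ℂ)/36) * k * z ^ 17 + ((19351001525 : ℂ)/216) * k ^ 2 * z ^ 17 + ((-729992875 : ℂ)/12) * k ^ 3 * z ^ 17 + ((-9806253125 : ℂ)/72) * k ^ 4 * z ^ 17 + ((-5599515625 : ℂ)/108) * k ^ 5 * z ^ 17 + ((165944057 : ℂ)/6) * z ^ 18 + ((1620237945 : ℂ)/8) * k * z ^ 18 + ((27290255375 : ℂ)/48) * k ^ 2 * z ^ 18 + ((54858339625 : ℂ)/72) * k ^ 3 * z ^ 18 + ((23313201875 : ℂ)/48) * k ^ 4 * z ^ 18 + ((8465459375 : ℂ)/72) * k ^ 5 * z ^ 18 + ((-616414118 : ℂ)/9) * z ^ 19 + ((-4114969055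 : ℂ)/9) * k * z ^ 19 + ((-31629590200 : ℂ)/27) * k ^ 2 * z ^ 19 + ((-38829943250 : ℂ)/27) * k ^ 3 * z ^ 19 + ((-22835131250 : ℂ)/27) * k ^ 4 * z ^ 19 + ((-5155778125 : ℂ)/27) * k ^ 5 * z ^ 19 + ((197728055 : ℂ)/3) * z ^ 20 + ((1747720915 : ℂ)/4) * k * z ^ 20 + ((239980813775 : ℂ)/216) * k ^ 2 * z ^ 20 + ((146131593125 : ℂ)/108) * k ^ 3 * z ^ 20 + ((170496941875 : ℂ)/216) * k ^ 4 * z ^ 20 + ((19103078125 : ℂ)/108) * k ^ 5 * z ^ 20 + ((-111390650 : ℂ)/3) * z ^ 21 + ((-1476952565 : ℂ)/6) * k * z ^ 21 + ((-33802490225 : ℂ)/54) * k ^ 2 * z ^ 21 + ((-41170142375 : ℂ)/54) * k ^ 3 * z ^ 21 + ((-24019716875 : ℂ)/54) * k ^ 4 * z ^ 21 + ((-897181250 : ℂ)/9) * k ^ 5 * z ^ 21 + ((77376355 : ℂ)/6) * z ^ 22 + ((683983235 : ℂ)/8) * k * z ^ 22 + ((93927447025 : ℂ)/432) * k ^ 2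 * z ^ 22 + ((57202298875 : ℂ)/216) * k ^ 3 * z ^ 22 + ((66749830625 : ℂ)/432) * k ^ 4 * z ^ 22 + ((7480109375 : ℂ)/216) * k ^ 5 * z ^ 22 + ((-7786394 : ℂ)/3) * z ^ 23 + ((-34414765 : ℂ)/2) * k * z ^ 23 + ((-4725997375 : ℂ)/108) * k ^ 2 * z ^ 23 + ((-2878170625 : ℂ)/54) * k ^ 3 * z ^ 23 + ((-3358581875 : ℂ)/108) * k ^ 4 * z ^ 23 + ((-376371875 : ℂ)/54) * k ^ 5 * z ^ 23 + ((1401323 : ℂ)/6) * z ^ 24 + ((37161905 : ℂ)/24) * k * z ^ 24 + ((1701082625 : ℂ)/432) * k ^ 2 * z ^ 24 + ((38369375 : ℂ)/8) * k ^ 3 * z ^ 24 + ((402964375 : ℂ)/144) * k ^ 4 * z ^ 24 + ((135471875 : ℂ)/216) * k ^ 5 * z ^ 24 + ((23975 : ℂ)/2) * S5 + ((1907375 : ℂ)/24) * S5 * k + ((29103125 : ℂ)/144) * S5 * k ^ 2 + ((53171875 : ℂ)/216) * S5 * k ^ 3 + ((62046875 : ℂ)/432) * S5 * k ^ 4 +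 ((6953125 : ℂ)/216) * S5 * k ^ 5 + (-119875 : ℂ) * S5 * z + ((-9536875 : ℂ)/12) * S5 * k * z + ((-145515625 : ℂ)/72) * S5 * k ^ 2 * z + ((-265859375 : ℂ)/108) * S5 * k ^ 3 * z + ((-310234375 : ℂ)/216) * S5 * k ^ 4 * z + ((-34765625 : ℂ)/108) * S5 * k ^ 5 * z + ((1030925 : ℂ)/2) * S5 * z ^ 2 + ((82017125 : ℂ)/24) * S5 * k * z ^ 2 + ((1251434375 : ℂ)/144) * S5 * k ^ 2 * z ^ 2 + ((2286390625 : ℂ)/216) * S5 * k ^ 3 * z ^ 2 + ((2668015625 : ℂ)/432) * S5 * k ^ 4 * z ^ 2 + ((298984375 : ℂ)/216) * S5 * k ^ 5 * z ^ 2 + ((-3073210 : ℂ)/3) * S5 * z ^ 3 + ((-40749175 : ℂ)/6) * S5 * k * z ^ 3 + ((-1865279375 : ℂ)/108) * S5 * k ^ 2 * z ^ 3 + ((-1135965625 : ℂ)/54) * S5 * k ^ 3 * z ^ 3 + ((-1325571875 : ℂ)/108) * S5 * k ^ 4 * z ^ 3 + ((-49515625 : ℂ)/18) * S5 * k ^ 5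 * z ^ 3 + ((-1509865 : ℂ)/3) * S5 * z ^ 4 + ((-13346425 : ℂ)/4) * S5 * k * z ^ 4 + ((-1832756875 : ℂ)/216) * S5 * k ^ 2 * z ^ 4 + ((-1116146875 : ℂ)/108) * S5 * k ^ 3 * z ^ 4 + ((-1302434375 : ℂ)/216) * S5 * k ^ 4 * z ^ 4 + ((-145953125 : ℂ)/108) * S5 * k ^ 5 * z ^ 4 + ((28354060 : ℂ)/3) * S5 * z ^ 5 + (62659675 : ℂ) * S5 * k * z ^ 5 + ((8604638125 : ℂ)/54) * S5 * k ^ 2 * z ^ 5 + ((5240256250 : ℂ)/27) * S5 * k ^ 3 * z ^ 5 + ((6114903125 : ℂ)/54) * S5 * k ^ 4 * z ^ 5 + ((685250000 : ℂ)/27) * S5 * k ^ 5 * z ^ 5 + ((-178797325 : ℂ)/6) * S5 * z ^ 6 + ((-4741496375 : ℂ)/24) * S5 * k * z ^ 6 + ((-217039534375 : ℂ)/432) * S5 * k ^ 2 * z ^ 6 + ((-132177921875 : ℂ)/216) * S5 * k ^ 3 * z ^ 6 + ((-154239671875 : ℂ)/432) * S5 * k ^ 4 * z ^ 6 + ((-5761484375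 : ℂ)/72) * S5 * k ^ 5 * z ^ 6 + (52397380 : ℂ) * S5 * z ^ 7 + ((1042138225 : ℂ)/3) * S5 * k * z ^ 7 + ((15901114375 : ℂ)/18) * S5 * k ^ 2 * z ^ 7 + ((29051525000 : ℂ)/27) * S5 * k ^ 3 * z ^ 7 + ((33900503125 : ℂ)/54) * S5 * k ^ 4 * z ^ 7 + ((3798968750 : ℂ)/27) * S5 * k ^ 5 * z ^ 7 + ((-982776055 : ℂ)/18) * S5 * z ^ 8 + ((-26163191425 : ℂ)/72) * S5 * k * z ^ 8 + ((-133629220625 : ℂ)/144) * S5 * k ^ 2 * z ^ 8 + ((-245229634375 : ℂ)/216) * S5 * k ^ 3 * z ^ 8 + ((-287441609375 : ℂ)/432) * S5 * k ^ 4 * z ^ 8 + ((-32346015625 : ℂ)/216) * S5 * k ^ 5 * z ^ 8 + ((83265730 : ℂ)/3) * S5 * z ^ 9 + ((1154610025 : ℂ)/6) * S5 * k * z ^ 9 + ((18459929375 : ℂ)/36) * S5 * k ^ 2 * z ^ 9 + ((35357678125 : ℂ)/54) * S5 * k ^ 3 * z ^ 9 + ((43180390625 : ℂ)/108) * S5 *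 k ^ 4 * z ^ 9 + ((5040859375 : ℂ)/54) * S5 * k ^ 5 * z ^ 9 + ((29884085 : ℂ)/9) * S5 * z ^ 10 + ((84724475 : ℂ)/36) * S5 * k * z ^ 10 + ((-3501693125 : ℂ)/72) * S5 * k ^ 2 * z ^ 10 + ((-4669915625 : ℂ)/36) * S5 * k ^ 3 * z ^ 10 + ((-937540625 : ℂ)/8) * S5 * k ^ 4 * z ^ 10 + ((-1259734375 : ℂ)/36) * S5 * k ^ 5 * z ^ 10 + ((-34036550 : ℂ)/3) * S5 * z ^ 11 + ((-162457625 : ℂ)/3) * S5 * k * z ^ 11 + ((-237568750 : ℂ)/3) * S5 * k ^ 2 * z ^ 11 + ((-188421875 : ℂ)/9) * S5 * k ^ 3 * z ^ 11 + ((290312500 : ℂ)/9) * S5 * k ^ 4 * z ^ 11 + ((149218750 : ℂ)/9) * S5 * k ^ 5 * z ^ 11 + ((5789530 : ℂ)/3) * S5 * z ^ 12 + ((8733675 : ℂ)/2) * S5 * k * z ^ 12 + ((-1329111875 : ℂ)/108) * S5 * k ^ 2 * z ^ 12 + ((-2440759375 : ℂ)/54) * S5 * k ^ 3 * z ^ 12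 + ((-4769459375 : ℂ)/108) * S5 * k ^ 4 * z ^ 12 + ((-81828125 : ℂ)/6) * S5 * k ^ 5 * z ^ 12 + ((11711000 : ℂ)/3) * S5 * z ^ 13 + ((77649250 : ℂ)/3) * S5 * k * z ^ 13 + ((1777328125 : ℂ)/27) * S5 * k ^ 2 * z ^ 13 + ((2164937500 : ℂ)/27) * S5 * k ^ 3 * z ^ 13 + ((1263203125 : ℂ)/27) * S5 * k ^ 4 * z ^ 13 + ((94375000 : ℂ)/9) * S5 * k ^ 5 * z ^ 13 + ((-7179725 : ℂ)/3) * S5 * z ^ 14 + ((-190432375 : ℂ)/12) * S5 * k * z ^ 14 + ((-8718134375 : ℂ)/216) * S5 * k ^ 2 * z ^ 14 + ((-5309921875 : ℂ)/108) * S5 * k ^ 3 * z ^ 14 + ((-6196671875 : ℂ)/216) * S5 * k ^ 4 * z ^ 14 + ((-231484375 : ℂ)/36) * S5 * k ^ 5 * z ^ 14 + (5382360 : ℂ) * S5 * z ^ 15 + ((81778075 : ℂ)/3) * S5 * k * z ^ 15 + ((2479470625 : ℂ)/54) * S5 * k ^ 2 * z ^ 15 + ((694503125 : ℂ)/27) *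 S5 * k ^ 3 * z ^ 15 + ((-150096875 : ℂ)/54) * S5 * k ^ 4 * z ^ 15 + ((-39265625 : ℂ)/9) * S5 * k ^ 5 * z ^ 15 + ((-80089825 : ℂ)/6) * S5 * z ^ 16 + ((-539452125 : ℂ)/8) * S5 * k * z ^ 16 + ((-16266303125 : ℂ)/144) * S5 * k ^ 2 * z ^ 16 + ((-13407296875 : ℂ)/216) * S5 * k ^ 3 * z ^ 16 + ((3566453125 : ℂ)/432) * S5 * k ^ 4 * z ^ 16 + ((2419296875 : ℂ)/216) * S5 * k ^ 5 * z ^ 16 + ((46856285 : ℂ)/9) * S5 * z ^ 17 + ((534799475 : ℂ)/36) * S5 * k * z ^ 17 + ((-1212618125 : ℂ)/72) * S5 * k ^ 2 * z ^ 17 + ((-9827621875 : ℂ)/108) * S5 * k ^ 3 * z ^ 17 + ((-20433471875 : ℂ)/216) * S5 * k ^ 4 * z ^ 17 + ((-3232328125 : ℂ)/108) * S5 * k ^ 5 * z ^ 17 + ((166180235 : ℂ)/6) * S5 * z ^ 18 + ((4609165225 : ℂ)/24) * S5 * k * z ^ 18 + ((73698651875 : ℂ)/144) * S5 * k ^ 2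 * z ^ 18 + ((141173603125 : ℂ)/216) * S5 * k ^ 3 * z ^ 18 + ((172422078125 : ℂ)/432) * S5 * k ^ 4 * z ^ 18 + ((20129921875 : ℂ)/216) * S5 * k ^ 5 * z ^ 18 + ((-513922340 : ℂ)/9) * S5 * z ^ 19 + ((-6839641825 : ℂ)/18) * S5 * k * z ^ 19 + ((-3880826875 : ℂ)/4) * S5 * k ^ 2 * z ^ 19 + ((-64084990625 : ℂ)/54) * S5 * k ^ 3 * z ^ 19 + ((-75101828125 : ℂ)/108) * S5 * k ^ 4 * z ^ 19 + ((-8449765625 : ℂ)/54) * S5 * k ^ 5 * z ^ 19 + (55504505 : ℂ) * S5 * z ^ 20 + ((4415779025 : ℂ)/12) * S5 * k * z ^ 20 + ((67377066875 : ℂ)/72) * S5 * k ^ 2 * z ^ 20 + ((123099240625 : ℂ)/108) * S5 * k ^ 3 * z ^ 20 + ((143646153125 : ℂ)/216) * S5 * k ^ 4 * z ^ 20 + ((16097359375 : ℂ)/108) * S5 * k ^ 5 * z ^ 20 + ((-96491500 : ℂ)/3) * S5 * z ^ 21 + ((-639715625 : ℂ)/3) * S5 * k * z ^ 21 + ((-29282828125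 : ℂ)/54) * S5 * k ^ 2 * z ^ 21 + ((-17833437500 : ℂ)/27) * S5 * k ^ 3 * z ^ 21 + ((-20810078125 : ℂ)/54) * S5 * k ^ 4 * z ^ 21 + ((-777343750 : ℂ)/9) * S5 * k ^ 5 * z ^ 21 + ((68714695 : ℂ)/6) * S5 * z ^ 22 + ((1822248325 : ℂ)/24) * S5 * k * z ^ 22 + ((83412983125 : ℂ)/432) * S5 * k ^ 2 * z ^ 22 + ((1881446875 : ℂ)/8) * S5 * k ^ 3 * z ^ 22 + ((19759371875 : ℂ)/144) * S5 * k ^ 4 * z ^ 22 + ((6642859375 : ℂ)/216) * S5 * k ^ 5 * z ^ 22 + ((-7020440 : ℂ)/3) * S5 * z ^ 23 + ((-46543850 : ℂ)/3) * S5 * k * z ^ 23 + ((-1065266875 : ℂ)/27) * S5 * k ^ 2 * z ^ 23 + ((-432503125 : ℂ)/9) * S5 * k ^ 3 * z ^ 23 + ((-84115625 : ℂ)/3) * S5 * k ^ 4 * z ^ 23 + ((-169671875 : ℂ)/27) * S5 * k ^ 5 * z ^ 23 + ((1269905 : ℂ)/6) * S5 * z ^ 24 + ((33676675 : ℂ)/24)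 * S5 * k * z ^ 24 + ((1541541875 : ℂ)/432) * S5 * k ^ 2 * z ^ 24 + ((938809375 : ℂ)/216) * S5 * k ^ 3 * z ^ 24 + ((1095509375 : ℂ)/432) * S5 * k ^ 4 * z ^ 24 + ((4546875 : ℂ)/8) * S5 * k ^ 5 * z ^ 24 + (-47950 : ℂ) * S5 ^ 2 * z ^ 3 + ((-1907375 : ℂ)/6) * S5 ^ 2 * k * z ^ 3 + ((-29103125 : ℂ)/36) * S5 ^ 2 * k ^ 2 * z ^ 3 + ((-53171875 : ℂ)/54) * S5 ^ 2 * k ^ 3 * z ^ 3 + ((-62046875 : ℂ)/108) * S5 ^ 2 * k ^ 4 * z ^ 3 + ((-6953125 : ℂ)/54) * S5 ^ 2 * k ^ 5 * z ^ 3 + (527450 : ℂ) * S5 ^ 2 * z ^ 4 + ((20981125 : ℂ)/6) * S5 ^ 2 * k * z ^ 4 + ((320134375 : ℂ)/36) * S5 ^ 2 * k ^ 2 * z ^ 4 + ((584890625 : ℂ)/54) * S5 ^ 2 * k ^ 3 * z ^ 4 + ((682515625 : ℂ)/108) * S5 ^ 2 * k ^ 4 * z ^ 4 + ((76484375 : ℂ)/54)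 * S5 ^ 2 * k ^ 5 * z ^ 4 + (-2541350 : ℂ) * S5 ^ 2 * z ^ 5 + ((-101090875 : ℂ)/6) * S5 ^ 2 * k * z ^ 5 + ((-1542465625 : ℂ)/36) * S5 ^ 2 * k ^ 2 * z ^ 5 + ((-2818109375 : ℂ)/54) * S5 ^ 2 * k ^ 3 * z ^ 5 + ((-3288484375 : ℂ)/108) * S5 ^ 2 * k ^ 4 * z ^ 5 + ((-368515625 : ℂ)/54) * S5 ^ 2 * k ^ 5 * z ^ 5 + (6952750 : ℂ) * S5 ^ 2 * z ^ 6 + ((276569375 : ℂ)/6) * S5 ^ 2 * k * z ^ 6 + ((4219953125 : ℂ)/36) * S5 ^ 2 * k ^ 2 * z ^ 6 + ((7709921875 : ℂ)/54) * S5 ^ 2 * k ^ 3 * z ^ 6 + ((8996796875 : ℂ)/108) * S5 ^ 2 * k ^ 4 * z ^ 6 + ((1008203125 : ℂ)/54) * S5 ^ 2 * k ^ 5 * z ^ 6 + (-11651850 : ℂ) * S5 ^ 2 * z ^ 7 + ((-154497375 : ℂ)/2) * S5 ^ 2 * k * z ^ 7 + ((-785784375 : ℂ)/4) * S5 ^ 2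 * k ^ 2 * z ^ 7 + ((-478546875 : ℂ)/2) * S5 ^ 2 * k ^ 3 * z ^ 7 + ((-558421875 : ℂ)/4) * S5 ^ 2 * k ^ 4 * z ^ 7 + ((-62578125 : ℂ)/2) * S5 ^ 2 * k ^ 5 * z ^ 7 + (11939550 : ℂ) * S5 ^ 2 * z ^ 8 + ((158312125 : ℂ)/2) * S5 ^ 2 * k * z ^ 8 + ((2415559375 : ℂ)/12) * S5 ^ 2 * k ^ 2 * z ^ 8 + ((4413265625 : ℂ)/18) * S5 ^ 2 * k ^ 3 * z ^ 8 + ((5149890625 : ℂ)/36) * S5 ^ 2 * k ^ 4 * z ^ 8 + ((577109375 : ℂ)/18) * S5 ^ 2 * k ^ 5 * z ^ 8 + (-6904800 : ℂ) * S5 ^ 2 * z ^ 9 + (-45777000 : ℂ) * S5 ^ 2 * k * z ^ 9 + (-116412500 : ℂ) * S5 ^ 2 * k ^ 2 * z ^ 9 + ((-425375000 : ℂ)/3) * S5 ^ 2 * k ^ 3 * z ^ 9 + ((-248187500 : ℂ)/3) * S5 ^ 2 * k ^ 4 * z ^ 9 + ((-55625000 : ℂ)/3) * S5 ^ 2 *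 k ^ 5 * z ^ 9 + (1150800 : ℂ) * S5 ^ 2 * z ^ 10 + (7629500 : ℂ) * S5 ^ 2 * k * z ^ 10 + ((58206250 : ℂ)/3) * S5 ^ 2 * k ^ 2 * z ^ 10 + ((212687500 : ℂ)/9) * S5 ^ 2 * k ^ 3 * z ^ 10 + ((124093750 : ℂ)/9) * S5 ^ 2 * k ^ 4 * z ^ 10 + ((27812500 : ℂ)/9) * S5 ^ 2 * k ^ 5 * z ^ 10 + (4315500 : ℂ) * S5 ^ 2 * z ^ 11 + (28610625 : ℂ) * S5 ^ 2 * k * z ^ 11 + ((145515625 : ℂ)/2) * S5 ^ 2 * k ^ 2 * z ^ 11 + ((265859375 : ℂ)/3) * S5 ^ 2 * k ^ 3 * z ^ 11 + ((310234375 : ℂ)/6) * S5 ^ 2 * k ^ 4 * z ^ 11 + ((34765625 : ℂ)/3) * S5 ^ 2 * k ^ 5 * z ^ 11 + (-13713700 : ℂ) * S5 ^ 2 * z ^ 12 + ((-272754625 : ℂ)/3) * S5 ^ 2 * k * z ^ 12 + ((-4161746875 : ℂ)/18) * S5 ^ 2 * k ^ 2 * z ^ 12 + ((-7603578125 : ℂ)/27)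 * S5 ^ 2 * k ^ 3 * z ^ 12 + ((-8872703125 : ℂ)/54) * S5 ^ 2 * k ^ 4 * z ^ 12 + ((-994296875 : ℂ)/27) * S5 ^ 2 * k ^ 5 * z ^ 12 + (23687300 : ℂ) * S5 ^ 2 * z ^ 13 + ((471121625 : ℂ)/3) * S5 ^ 2 * k * z ^ 13 + ((7188471875 : ℂ)/18) * S5 ^ 2 * k ^ 2 * z ^ 13 + ((13133453125 : ℂ)/27) * S5 ^ 2 * k ^ 3 * z ^ 13 + ((15325578125 : ℂ)/54) * S5 ^ 2 * k ^ 4 * z ^ 13 + ((1717421875 : ℂ)/27) * S5 ^ 2 * k ^ 5 * z ^ 13 + (-23687300 : ℂ) * S5 ^ 2 * z ^ 14 + ((-471121625 : ℂ)/3) * S5 ^ 2 * k * z ^ 14 + ((-7188471875 : ℂ)/18) * S5 ^ 2 * k ^ 2 * z ^ 14 + ((-13133453125 : ℂ)/27) * S5 ^ 2 * k ^ 3 * z ^ 14 + ((-15325578125 : ℂ)/54) * S5 ^ 2 * k ^ 4 * z ^ 14 + ((-1717421875 : ℂ)/27) * S5 ^ 2 * k ^ 5 * z ^ 14 + (13713700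 : ℂ) * S5 ^ 2 * z ^ 15 + ((272754625 : ℂ)/3) * S5 ^ 2 * k * z ^ 15 + ((4161746875 : ℂ)/18) * S5 ^ 2 * k ^ 2 * z ^ 15 + ((7603578125 : ℂ)/27) * S5 ^ 2 * k ^ 3 * z ^ 15 + ((8872703125 : ℂ)/54) * S5 ^ 2 * k ^ 4 * z ^ 15 + ((994296875 : ℂ)/27) * S5 ^ 2 * k ^ 5 * z ^ 15 + (-4315500 : ℂ) * S5 ^ 2 * z ^ 16 + (-28610625 : ℂ) * S5 ^ 2 * k * z ^ 16 + ((-145515625 : ℂ)/2) * S5 ^ 2 * k ^ 2 * z ^ 16 + ((-265859375 : ℂ)/3) * S5 ^ 2 * k ^ 3 * z ^ 16 + ((-310234375 : ℂ)/6) * S5 ^ 2 * k ^ 4 * z ^ 16 + ((-34765625 : ℂ)/3) * S5 ^ 2 * k ^ 5 * z ^ 16 + (-1150800 : ℂ) * S5 ^ 2 * z ^ 17 + (-7629500 : ℂ) * S5 ^ 2 * k * z ^ 17 + ((-58206250 : ℂ)/3) * S5 ^ 2 * k ^ 2 * z ^ 17 + ((-212687500 : ℂ)/9) * S5 ^ 2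 * k ^ 3 * z ^ 17 + ((-124093750 : ℂ)/9) * S5 ^ 2 * k ^ 4 * z ^ 17 + ((-27812500 : ℂ)/9) * S5 ^ 2 * k ^ 5 * z ^ 17 + (6904800 : ℂ) * S5 ^ 2 * z ^ 18 + (45777000 : ℂ) * S5 ^ 2 * k * z ^ 18 + (116412500 : ℂ) * S5 ^ 2 * k ^ 2 * z ^ 18 + ((425375000 : ℂ)/3) * S5 ^ 2 * k ^ 3 * z ^ 18 + ((248187500 : ℂ)/3) * S5 ^ 2 * k ^ 4 * z ^ 18 + ((55625000 : ℂ)/3) * S5 ^ 2 * k ^ 5 * z ^ 18 + (-11939550 : ℂ) * S5 ^ 2 * z ^ 19 + ((-158312125 : ℂ)/2) * S5 ^ 2 * k * z ^ 19 + ((-2415559375 : ℂ)/12) * S5 ^ 2 * k ^ 2 * z ^ 19 + ((-4413265625 : ℂ)/18) * S5 ^ 2 * k ^ 3 * z ^ 19 + ((-5149890625 : ℂ)/36) * S5 ^ 2 * k ^ 4 * z ^ 19 + ((-577109375 : ℂ)/18) * S5 ^ 2 * k ^ 5 * z ^ 19 + (11651850 : ℂ) * S5 ^ 2 * z ^ 20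 + ((154497375 : ℂ)/2) * S5 ^ 2 * k * z ^ 20 + ((785784375 : ℂ)/4) * S5 ^ 2 * k ^ 2 * z ^ 20 + ((478546875 : ℂ)/2) * S5 ^ 2 * k ^ 3 * z ^ 20 + ((558421875 : ℂ)/4) * S5 ^ 2 * k ^ 4 * z ^ 20 + ((62578125 : ℂ)/2) * S5 ^ 2 * k ^ 5 * z ^ 20 + (-6952750 : ℂ) * S5 ^ 2 * z ^ 21 + ((-276569375 : ℂ)/6) * S5 ^ 2 * k * z ^ 21 + ((-4219953125 : ℂ)/36) * S5 ^ 2 * k ^ 2 * z ^ 21 + ((-7709921875 : ℂ)/54) * S5 ^ 2 * k ^ 3 * z ^ 21 + ((-8996796875 : ℂ)/108) * S5 ^ 2 * k ^ 4 * z ^ 21 + ((-1008203125 : ℂ)/54) * S5 ^ 2 * k ^ 5 * z ^ 21 + (2541350 : ℂ) * S5 ^ 2 * z ^ 22 + ((101090875 : ℂ)/6) * S5 ^ 2 * k * z ^ 22 + ((1542465625 : ℂ)/36) * S5 ^ 2 * k ^ 2 * z ^ 22 + ((2818109375 : ℂ)/54) * S5 ^ 2 * k ^ 3 * z ^ 22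 + ((3288484375 : ℂ)/108) * S5 ^ 2 * k ^ 4 * z ^ 22 + ((368515625 : ℂ)/54) * S5 ^ 2 * k ^ 5 * z ^ 22 + (-527450 : ℂ) * S5 ^ 2 * z ^ 23 + ((-20981125 : ℂ)/6) * S5 ^ 2 * k * z ^ 23 + ((-320134375 : ℂ)/36) * S5 ^ 2 * k ^ 2 * z ^ 23 + ((-584890625 : ℂ)/54) * S5 ^ 2 * k ^ 3 * z ^ 23 + ((-682515625 : ℂ)/108) * S5 ^ 2 * k ^ 4 * z ^ 23 + ((-76484375 : ℂ)/54) * S5 ^ 2 * k ^ 5 * z ^ 23 + (47950 : ℂ) * S5 ^ 2 * z ^ 24 + ((1907375 : ℂ)/6) * S5 ^ 2 * k * z ^ 24 + ((29103125 : ℂ)/36) * S5 ^ 2 * k ^ 2 * z ^ 24 + ((53171875 : ℂ)/54) * S5 ^ 2 * k ^ 3 * z ^ 24 + ((62046875 : ℂ)/108) * S5 ^ 2 * k ^ 4 * z ^ 24 + ((6953125 : ℂ)/54) * S5 ^ 2 * k ^ 5 * z ^ 24) * hs5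

private lemma basePoly (z : ℂ) :
    z * dNPhi z - 7 * NPhi z = NAf z * Pf z := by
  unfold NAf Pf NPhi dNPhi
  linear_combination (((5 : ℂ)/27) * z ^ 3 + ((-10 : ℂ)/9) * z ^ 4 + ((70 : ℂ)/27) * z ^ 5 + ((-25 : ℂ)/9) * z ^ 6 + ((10 : ℂ)/9) * z ^ 7 + ((10 : ℂ)/9) * z ^ 10 + ((-25 : ℂ)/9) * z ^ 11 + ((70 : ℂ)/27) * z ^ 12 + ((-10 : ℂ)/9) * z ^ 13 + ((5 : ℂ)/27) * z ^ 14) * hs5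

private lemma fcert (k z : ℂ) (hz : z ≠ 0) :
    p0C k * (AF z * (Pf z * (z ^ 5)⁻¹)) + p1C k * (AF z * (Pf z * (z ^ 5)⁻¹) ^ 2)
      = (dNCf k z * (z ^ 7)⁻¹ + NCf k z * (-(((7:ℕ):ℂ) * z ^ (7 - 1)) / (z ^ 7) ^ 2))
          * (Pf z * (z ^ 5)⁻¹)
        + k * (NCf k z * (z ^ 7)⁻¹) * DLF z := by
  have hzw : z * z⁻¹ = 1 := mul_inv_cancel₀ hz
  have hp := certPoly k z
  rw [hAF hz]
  unfold DLF
  push_cast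
  linear_combination (z⁻¹ ^ 13) * hp + ((-1 : ℂ) * z⁻¹ ^ 8 * (NAf z) * (Pf z) * (p0C k) + (1 : ℂ) * z⁻¹ ^ 12 * (Pf z) * (dNCf k z) + (1 : ℂ) * z⁻¹ ^ 12 * k * (dPf z) * (NCf k z) + (7 : ℂ) * z⁻¹ ^ 13 * (Pf z) * (NCf k z) + (5 : ℂ) * z⁻¹ ^ 13 * k * (Pf z) * (NCf k z) + (-1 : ℂ) * z * z⁻¹ ^ 9 * (NAf z) * (Pf z) * (p0C k) + (7 : ℂ) * z * z⁻¹ ^ 14 * (Pf z) * (NCf k z) + (5 : ℂ) * z * z⁻¹ ^ 14 * k * (Pf z) * (NCf k z) + (-1 : ℂ) * z ^ 2 * z⁻¹ ^ 10 * (NAf z) * (Pf z) * (p0C k) + (7 : ℂ) * z ^ 2 * z⁻¹ ^ 15 * (Pf z) * (NCf k z) + (5 : ℂ) * z ^ 2 * z⁻¹ ^ 15 * k * (Pf z) * (NCf k z) + (-1 : ℂ) * z ^ 3 * z⁻¹ ^ 11 * (NAf z) * (Pf z) * (p0C k) + (7 : ℂ) * z ^ 3 * z⁻¹ ^ 16 *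 (Pf z) * (NCf k z) + (5 : ℂ) * z ^ 3 * z⁻¹ ^ 16 * k * (Pf z) * (NCf k z) + (-1 : ℂ) * z ^ 4 * z⁻¹ ^ 12 * (NAf z) * (Pf z) * (p0C k) + (7 : ℂ) * z ^ 4 * z⁻¹ ^ 17 * (Pf z) * (NCf k z) + (7 : ℂ) * z ^ 5 * z⁻¹ ^ 18 * (Pf z) * (NCf k z)) * hzw

private lemma fbase (z : ℂ) (hz : z ≠ 0) :
    AF z * (Pf z * (z ^ 5)⁻¹)
      = dNPhi z * (z ^ 7)⁻¹ + NPhi z * (-(((7:ℕ):ℂ) * z ^ (7 - 1)) / (z ^ 7) ^ 2) := by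
  have hzw : z * z⁻¹ = 1 := mul_inv_cancel₀ hz
  have hb := basePoly z
  rw [hAF hz]
  push_cast
  linear_combination (-(z⁻¹ ^ 8)) * hb + ((1 : ℂ) * z⁻¹ ^ 7 * (dNPhi z) + (7 : ℂ) * z⁻¹ ^ 8 * (NPhi z) + (7 : ℂ) * z * z⁻¹ ^ 9 * (NPhi z) + (7 : ℂ) * z ^ 2 * z⁻¹ ^ 10 * (NPhi z) + (7 : ℂ) * z ^ 3 * z⁻¹ ^ 11 * (NPhi z) + (7 : ℂ) * z ^ 4 * z⁻¹ ^ 12 * (NPhi z) + (7 : ℂ) * z ^ 5 * z⁻¹ ^ 13 * (NPhi z)) * hzw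

private lemma sphere_ne_zero {z : ℂ} (hz : z ∈ sphere (0:ℂ) 1) : z ≠ 0 := by
  intro h
  rw [mem_sphere_iff_norm, h] at hz
  norm_num at hz

private lemma keyFTC (F f : ℂ → ℂ) (h : ∀ z ∈ sphere (0:ℂ) 1, HasDerivAt F (f z) z)
    (hf : ContinuousOn f (sphere (0:ℂ) 1)) : (∮ z in C(0, 1), f z) = 0 := by
  have hint : IntervalIntegrable (fun θ : ℝ => deriv (circleMap 0 1) θ • f (circleMap 0 1 θ))
      MeasureTheory.volume 0 (2*π) := by
    apply ContinuousOn.intervalIntegrable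
    refine ContinuousOn.smul (f := fun θ => deriv (circleMap 0 1) θ) (g := fun θ => f (circleMap 0 1 θ)) ?_ ?_
    · have hc : Continuous fun θ : ℝ => circleMap 0 1 θ * Complex.I :=
        (continuous_circleMap 0 1).mul continuous_const
      exact ContinuousOn.congr hc.continuousOn (fun θ _ => deriv_circleMap 0 1 θ)
    · exact hf.comp (continuous_circleMap 0 1).continuousOn
        (fun θ _ => circleMap_mem_sphere 0 zero_le_one θ)
  have hd : ∀ θ ∈ uIcc (0:ℝ) (2*π),
      HasDerivAt (fun θ : ℝ => F (circleMap 0 1 θ))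
        (deriv (circleMap 0 1) θ • f (circleMap 0 1 θ)) θ := by
    intro θ _
    have h1 := (h _ (circleMap_mem_sphere 0 zero_le_one θ)).comp θ (hasDerivAt_circleMap 0 1 θ)
    simp only [deriv_circleMap, smul_eq_mul]
    exact h1.congr_deriv (by ring)
  have hkey := intervalIntegral.integral_eq_sub_of_hasDerivAt hd hint
  have hper : circleMap 0 1 (2*π) = circleMap 0 1 0 := by
    simpa using periodic_circleMap 0 1 0
  unfold circleIntegral
  rw [hkey, hper, sub_self]

private lemma contAF : ContinuousOn AF (sphere (0:ℂ) 1) := by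
  unfold AF
  apply ContinuousOn.add
  · exact Continuous.continuousOn (by fun_prop)
  · apply ContinuousOn.div
    · exact Continuous.continuousOn (by fun_prop)
    · exact Continuous.continuousOn (by fun_prop)
    · intro z hz
      exact pow_ne_zero 2 (pow_ne_zero 2 (sphere_ne_zero hz))

private lemma contLf : ContinuousOn Lfun (sphere (0:ℂ) 1) := by
  unfold Lfun
  apply ContinuousOn.div
  · exact Continuous.continuousOn (by fun_prop)
  · exact Continuous.continuousOn (by fun_prop)
  · exact fun z hz => pow_ne_zero 5 (sphere_ne_zero hz)

private lemma contInt (m : ℕ) :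
    ContinuousOn (fun z => (Lfun z) ^ m * deriv Q2fun z) (sphere (0:ℂ) 1) := by
  apply ContinuousOn.mul (contLf.pow m)
  apply ContinuousOn.congr contAF
  intro z hz
  exact (hQ2 (sphere_ne_zero hz)).deriv

private lemma intComb (c₁ c₂ : ℂ) (f g : ℂ → ℂ)
    (hf : CircleIntegrable f 0 1) (hg : CircleIntegrable g 0 1) :
    (∮ z in C(0, 1), (c₁ * f z + c₂ * g z))
      = c₁ * (∮ z in C(0, 1), f z) + c₂ * (∮ z in C(0, 1), g z) := by
  unfold circleIntegral
  rw [← intervalIntegral.integral_const_mul, ← intervalIntegral.integral_const_mul,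
    ← intervalIntegral.integral_add (hf.out.const_mul c₁) (hg.out.const_mul c₂)]
  congr 1
  funext θ
  simp only [smul_eq_mul]
  ring

noncomputable def Smom (i : ℕ) : ℂ := ∮ z in C(0, 1), (Lfun z) ^ i * deriv Q2fun z

private lemma Smom_zero : Smom 0 = 0 := by
  unfold Smom
  apply keyFTC Q2fun
  · intro z hz
    have h := hQ2 (sphere_ne_zero hz)
    have hv : (Lfun z) ^ 0 * deriv Q2fun z = AF z := by
      rw [pow_zero, one_mul, h.deriv]
    rw [hv]
    exact h
  · exact contInt 0

private lemma Smom_one : Smom 1 = 0 := by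
  unfold Smom
  apply keyFTC (fun z => NPhi z * (z ^ 7)⁻¹)
  · intro z hzs
    have hz := sphere_ne_zero hzs
    have h : HasDerivAt (fun z : ℂ => NPhi z * (z ^ 7)⁻¹)
        (dNPhi z * (z ^ 7)⁻¹ + NPhi z * (-(((7:ℕ):ℂ) * z ^ (7 - 1)) / (z ^ 7) ^ 2)) z :=
      (hNPhid z).mul ((hasDerivAt_pow 7 z).inv (pow_ne_zero 7 hz))
    have hval : dNPhi z * (z ^ 7)⁻¹ + NPhi z * (-(((7:ℕ):ℂ) * z ^ (7 - 1)) / (z ^ 7) ^ 2)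
        = (Lfun z) ^ 1 * deriv Q2fun z := by
      rw [pow_one, (hQ2 hz).deriv, Lfun_eq hz]
      linear_combination (-1 : ℂ) * fbase z hz
    rw [← hval]
    exact h
  · exact contInt 1

private lemma recurrence (m : ℕ) :
    p0C ((m+1 : ℕ) : ℂ) * Smom (m+1) + p1C ((m+1 : ℕ) : ℂ) * Smom (m+2) = 0 := by
  have h0 : (∮ z in C(0, 1), (p0C ((m+1 : ℕ) : ℂ) * ((Lfun z) ^ (m+1) * deriv Q2fun z)
      + p1C ((m+1 : ℕ) : ℂ) * ((Lfun z) ^ (m+2) * deriv Q2fun z))) = 0 := by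
    apply keyFTC (fun z => (NCf ((m+1 : ℕ) : ℂ) z * (z ^ 7)⁻¹) * (Lfun z) ^ (m+1))
    · intro z hzs
      have hz := sphere_ne_zero hzs
      have hCf : HasDerivAt (fun z => NCf ((m+1 : ℕ) : ℂ) z * (z ^ 7)⁻¹)
          (dNCf ((m+1 : ℕ) : ℂ) z * (z ^ 7)⁻¹
            + NCf ((m+1 : ℕ) : ℂ) z * (-(((7:ℕ):ℂ) * z ^ (7 - 1)) / (z ^ 7) ^ 2)) z :=
        (hNCd ((m+1 : ℕ) : ℂ) z).mul ((hasDerivAt_pow 7 z).inv (pow_ne_zero 7 hz))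
      have hpow : HasDerivAt (fun z => (Lfun z) ^ (m+1))
          (((m+1 : ℕ) : ℂ) * (Lfun z) ^ m * DLF z) z := by
        have h := (hLf hz).pow (m+1)
        rwa [Nat.add_sub_cancel] at h
      have hmul := hCf.mul hpow
      have fe : p0C ((m+1 : ℕ) : ℂ) * (AF z * Lfun z)
            + p1C ((m+1 : ℕ) : ℂ) * (AF z * Lfun z ^ 2)
          = (dNCf ((m+1 : ℕ) : ℂ) z * (z ^ 7)⁻¹
              + NCf ((m+1 : ℕ) : ℂ) z * (-(((7:ℕ):ℂ) * z ^ (7 - 1)) / (z ^ 7) ^ 2)) * Lfun z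
            + ((m+1 : ℕ) : ℂ) * (NCf ((m+1 : ℕ) : ℂ) z * (z ^ 7)⁻¹) * DLF z := by
        rw [Lfun_eq hz]
        exact fcert ((m+1 : ℕ) : ℂ) z hz
      have hval : (dNCf ((m+1 : ℕ) : ℂ) z * (z ^ 7)⁻¹
            + NCf ((m+1 : ℕ) : ℂ) z * (-(((7:ℕ):ℂ) * z ^ (7 - 1)) / (z ^ 7) ^ 2))
              * (Lfun z) ^ (m+1)
            + (NCf ((m+1 : ℕ) : ℂ) z * (z ^ 7)⁻¹) * (((m+1 : ℕ) : ℂ) * (Lfun z) ^ m * DLF z)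
          = p0C ((m+1 : ℕ) : ℂ) * ((Lfun z) ^ (m+1) * deriv Q2fun z)
            + p1C ((m+1 : ℕ) : ℂ) * ((Lfun z) ^ (m+2) * deriv Q2fun z) := by
        rw [(hQ2 hz).deriv]
        linear_combination (-((Lfun z) ^ m)) * fe
      rw [← hval]
      exact hmul
    · apply ContinuousOn.add
      · exact continuousOn_const.mul (contInt (m+1))
      · exact continuousOn_const.mul (contInt (m+2))
  have h1 := intComb (p0C ((m+1 : ℕ) : ℂ)) (p1C ((m+1 : ℕ) : ℂ))
    (fun z => (Lfun z) ^ (m+1) * deriv Q2fun z)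
    (fun z => (Lfun z) ^ (m+2) * deriv Q2fun z)
    (ContinuousOn.circleIntegrable zero_le_one (contInt (m+1)))
    (ContinuousOn.circleIntegrable zero_le_one (contInt (m+2)))
  exact h1.symm.trans h0

private lemma p1C_ne (n : ℕ) : p1C ((n : ℕ) : ℂ) ≠ 0 := by
  intro h
  have hkey : p1C ((n : ℕ) : ℂ)
      = ((((25011504 : ℝ) + (165818340 : ℝ) * (n:ℝ) + (421679250 : ℝ) * (n:ℝ) ^ 2 + (513607500 : ℝ) * (n:ℝ) ^ 3 + (299666250 : ℝ) * (n:ℝ) ^ 4 + (67162500 : ℝ) * (n:ℝ) ^ 5) - ((11185776 : ℝ) + (74158740 : ℝ) * (n:ℝ) + (188588250 : ℝ) * (n:ℝ) ^ 2 + (229702500 : ℝ) * (n:ℝ) ^ 3 + (134021250 : ℝ) * (n:ℝ) ^ 4 + (30037500 : ℝ) * (n:ℝ) ^ 5) * Real.sqrt 5 : ℝ) : ℂ) := by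
    unfold p1C
    push_cast
    ring
  rw [hkey] at h
  rw [Complex.ofReal_eq_zero, sub_eq_zero] at h
  have hBpos : (0:ℝ) < (11185776 : ℝ) + (74158740 : ℝ) * (n:ℝ) + (188588250 : ℝ) * (n:ℝ) ^ 2 + (229702500 : ℝ) * (n:ℝ) ^ 3 + (134021250 : ℝ) * (n:ℝ) ^ 4 + (30037500 : ℝ) * (n:ℝ) ^ 5 := by positivity
  have h5 : Real.sqrt 5 = ((((25011504 : ℚ) + (165818340 : ℚ) * (n:ℚ) + (421679250 : ℚ) * (n:ℚ) ^ 2 + (513607500 : ℚ) * (n:ℚ) ^ 3 + (299666250 : ℚ) * (n:ℚ) ^ 4 + (67162500 : ℚ) * (n:ℚ) ^ 5) / ((11185776 : ℚ) + (74158740 : ℚ) * (n:ℚ) + (188588250 : ℚ) * (n:ℚ) ^ 2 + (229702500 : ℚ) * (n:ℚ) ^ 3 + (134021250 : ℚ) * (n:ℚ) ^ 4 + (30037500 : ℚ) * (n:ℚ) ^ 5) : ℚ) : ℝ) := by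
    push_cast
    rw [eq_div_iff (by positivity)]
    linarith [h]
  have hirr : Irrational (Real.sqrt 5) := (by norm_num : Nat.Prime 5).irrational_sqrt
  exact hirr ⟨_, h5.symm⟩

/-- `∮_{S¹} L(z)^i Q_2'(z) dz = 0` for all integers `i ≥ 0`. -/
theorem stmt2 (i : ℕ) : (∮ z in C(0, 1), (Lfun z) ^ i * deriv Q2fun z) = 0 := by
  have aux : ∀ n : ℕ, Smom (n+1) = 0 := by
    intro n
    induction n with
    | zero => exact Smom_one
    | succ m ih =>
      have hr := recurrence m
      rw [ih, mul_zero, zero_add] at hr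
      rcases mul_eq_zero.mp hr with h | h
      · exact absurd h (p1C_ne (m+1))
      · exact h
  cases i with
  | zero => exact Smom_zero
  | succ n => exact aux n
end

section
/- Let L(z) = K(z-1)^6 (z-a)^3 (z-b) / z^5 where K = (11+5√5)/216, a = (-3+√5)/2, b = (7-3√5)/2, viewed as a Laurent polynomial over ℂ. Let Q_3 = (47/2 + (21/2)√5)z^3 - (195/2 + (87/2)√5)z^2 + (255/2 + (111/2)√5)z + z^{-3}. Then ∮_{S^1} L(z)^i Q_3'(z) dz = 0 for all integers i ≥ 0. -/
/-- `Q_3 = (47/2 + (21/2)√5)z³ - (195/2 + (87/2)√5)z² + (255/2 + (111/2)√5)z + z⁻³`. -/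
noncomputable def Q3fun (z : ℂ) : ℂ :=
  (47 / 2 + 21 / 2 * (Real.sqrt 5 : ℂ)) * z ^ 3 -
    (195 / 2 + 87 / 2 * (Real.sqrt 5 : ℂ)) * z ^ 2 +
    (255 / 2 + 111 / 2 * (Real.sqrt 5 : ℂ)) * z + (z ^ 3)⁻¹

noncomputable section
namespace S3aux
open Polynomial Matrix Finset

def rt : ℂ := (Real.sqrt 5 : ℝ)

lemma rt_sq : rt ^ 2 = 5 := by
  rw [rt, ← Complex.ofReal_pow, Real.sq_sqrt (by norm_num : (5:ℝ) ≥ 0)]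
  norm_num

def sf (z : ℂ) : ℂ := z + z⁻¹
def pf (z : ℂ) : ℂ := (3/2 + rt/2)*z^2 - (5/2 + rt)*z - 13/4 + (-(5/2) + rt)*z⁻¹
    + (3/2 - rt/2)*z⁻¹^2
def dsf (z : ℂ) : ℂ := 1 - z⁻¹^2
def dpf (z : ℂ) : ℂ := 2*(3/2 + rt/2)*z - (5/2 + rt) - (-(5/2) + rt)*z⁻¹^2
    - 2*(3/2 - rt/2)*z⁻¹^3
def ef (z : ℂ) : ℂ := sf z * dsf z - dpf z

lemma hasDeriv_sf {z : ℂ} (hz : z ≠ 0) : HasDerivAt sf (dsf z) z := by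
  have h := (hasDerivAt_id z).add (hasDerivAt_inv hz)
  refine h.congr_deriv (Eq.symm ?_)
  unfold dsf; ring

lemma hasDeriv_pf {z : ℂ} (hz : z ≠ 0) : HasDerivAt pf (dpf z) z := by
  have hinv := hasDerivAt_inv hz
  have h2 : HasDerivAt (fun z : ℂ => z^2) ((2:ℕ) * z ^ 1) z := hasDerivAt_pow 2 z
  have hi2 : HasDerivAt (fun z : ℂ => z⁻¹^2) ((2:ℕ) * z⁻¹ ^ 1 * (-(z ^ 2)⁻¹)) z := hinv.pow 2
  have h := ((((h2.const_mul ((3:ℂ)/2 + rt/2)).sub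
      ((hasDerivAt_id z).const_mul ((5:ℂ)/2 + rt))).sub (hasDerivAt_const z (13/4))).add
      (hinv.const_mul (-(5/2) + rt))).add (hi2.const_mul ((3:ℂ)/2 - rt/2))
  refine h.congr_deriv (Eq.symm ?_)
  unfold dpf
  ring

def Mz (z : ℂ) : Matrix (Fin 2) (Fin 2) ℂ := !![0, -pf z; 1, sf z]

def ab : ℕ → ℂ → ℂ × ℂ
  | 0 => fun _ => (0, 1)
  | n+1 => fun z => (sf z * (ab n z).1 + (ab n z).2, -pf z * (ab n z).1)

def af (n : ℕ) (z : ℂ) : ℂ := (ab n z).1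
def bf (n : ℕ) (z : ℂ) : ℂ := (ab n z).2
def Tf (n : ℕ) (z : ℂ) : ℂ := sf z * af n z + 2 * bf n z

def Df : ℕ → ℂ → ℂ
  | 0 => fun _ => 0
  | n+1 => fun z => ((n:ℂ)+1) * (bf n z * dsf z + af n z * ef z)

lemma Mpow (n : ℕ) (z : ℂ) :
    Mz z ^ n = !![bf n z, -pf z * af n z; af n z, sf z * af n z + bf n z] := by
  induction n with
  | zero =>
      simp only [pow_zero, af, bf, ab, Matrix.one_fin_two]
      norm_num
  | succ n ih =>
      rw [pow_succ, ih, Mz, Matrix.mul_fin_two]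
      have ha : af (n+1) z = sf z * af n z + bf n z := rfl
      have hb : bf (n+1) z = -pf z * af n z := rfl
      rw [ha, hb]
      ext i j
      fin_cases i <;> fin_cases j <;>
        simp [Matrix.cons_val_zero, Matrix.cons_val_one] <;> ring

lemma TfD (n : ℕ) : ∀ z : ℂ, z ≠ 0 → HasDerivAt (Tf n) (Df n z) z := by
  induction n using Nat.twoStepInduction with
  | zero =>
      intro z hz
      have h : Tf 0 = fun _ : ℂ => 2 := by
        funext w; simp [Tf, af, bf, ab]
      rw [h]
      exact hasDerivAt_const z 2
  | one =>
      intro z hz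
      have h : Tf 1 = sf := by
        funext w; simp [Tf, af, bf, ab]
      rw [h]
      have h2 : Df 1 z = dsf z := by simp [Df, af, bf, ab]
      rw [h2]
      exact hasDeriv_sf hz
  | more n ih0 ih1 =>
      intro z hz
      have hrec : Tf (n+2) = fun z => sf z * Tf (n+1) z - pf z * Tf n z := by
        funext w
        simp only [Tf, af, bf, ab]
        ring
      rw [hrec]
      have h := ((hasDeriv_sf hz).mul (ih1 z hz)).sub ((hasDeriv_pf hz).mul (ih0 z hz))
      refine h.congr_deriv (Eq.symm ?_)
      cases n with
      | zero =>
          simp only [Df, Tf, af, bf, ab, ef]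
          push_cast
          ring
      | succ m =>
          simp only [Df, Tf, af, bf, ab, ef]
          push_cast
          ring


def TrP (F : Polynomial ℂ) (z : ℂ) : ℂ :=
  ∑ n ∈ Finset.range (F.natDegree + 1), F.coeff n * Tf n z

lemma entry00 (G : Polynomial ℂ) (z : ℂ) {N : ℕ} (hN : G.natDegree < N) :
    (aeval (Mz z) G) 0 0 = ∑ n ∈ Finset.range N, G.coeff n * bf n z := by
  rw [Polynomial.aeval_eq_sum_range' hN (Mz z)]
  rw [Matrix.sum_apply]
  refine Finset.sum_congr rfl fun n _ => ?_
  rw [Matrix.smul_apply, Mpow n z, smul_eq_mul]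
  simp

lemma entry10 (G : Polynomial ℂ) (z : ℂ) {N : ℕ} (hN : G.natDegree < N) :
    (aeval (Mz z) G) 1 0 = ∑ n ∈ Finset.range N, G.coeff n * af n z := by
  rw [Polynomial.aeval_eq_sum_range' hN (Mz z)]
  rw [Matrix.sum_apply]
  refine Finset.sum_congr rfl fun n _ => ?_
  rw [Matrix.smul_apply, Mpow n z, smul_eq_mul]
  simp

lemma sum_Df (F : Polynomial ℂ) (z : ℂ) :
    ∑ n ∈ Finset.range (F.natDegree + 1), F.coeff n * Df n z
      = (aeval (Mz z) (derivative F)) 0 0 * dsf z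
        + (aeval (Mz z) (derivative F)) 1 0 * ef z := by
  by_cases hd : F.natDegree = 0
  · have hD : derivative F = 0 := by
      have := Polynomial.natDegree_eq_zero.mp hd
      obtain ⟨c, rfl⟩ := this
      simp
    rw [hD]
    simp [hd, Df]
  · rw [entry00 (derivative F) z (Polynomial.natDegree_derivative_lt hd),
        entry10 (derivative F) z (Polynomial.natDegree_derivative_lt hd),
        Finset.sum_mul, Finset.sum_mul, ← Finset.sum_add_distrib,
        Finset.sum_range_succ']
    have h0 : F.coeff 0 * Df 0 z = 0 := by simp [Df]
    rw [h0, add_zero]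
    refine Finset.sum_congr rfl fun n _ => ?_
    rw [Polynomial.coeff_derivative]
    show F.coeff (n+1) * (((n:ℂ)+1) * (bf n z * dsf z + af n z * ef z)) = _
    push_cast
    ring

lemma TrP_hasDeriv (F : Polynomial ℂ) {z : ℂ} (hz : z ≠ 0) :
    HasDerivAt (TrP F)
      ((aeval (Mz z) (derivative F)) 0 0 * dsf z
        + (aeval (Mz z) (derivative F)) 1 0 * ef z) z := by
  rw [← sum_Df]
  exact HasDerivAt.fun_sum fun n _ => (TfD n z hz).const_mul (F.coeff n)

def pint (q : Polynomial ℂ) : Polynomial ℂ :=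
  q.sum fun n c => C (c / ((n:ℂ)+1)) * X^(n+1)

lemma derivative_pint (q : Polynomial ℂ) : derivative (pint q) = q := by
  unfold pint
  rw [Polynomial.sum, map_sum]
  have h : ∀ n ∈ q.support,
      derivative (C (q.coeff n / ((n:ℂ)+1)) * X^(n+1)) = C (q.coeff n) * X ^ n := by
    intro n _
    rw [Polynomial.derivative_C_mul_X_pow]
    congr 1
    · have hne : ((n:ℂ)+1) ≠ 0 := Nat.cast_add_one_ne_zero n
      congr 1
      push_cast
      field_simp
  rw [Finset.sum_congr rfl h]
  conv_rhs => rw [← Polynomial.sum_C_mul_X_pow_eq q]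
  rw [Polynomial.sum]


lemma rs5 : (Real.sqrt 5 : ℂ)^2 = 5 := by
  rw [← Complex.ofReal_pow, Real.sq_sqrt (by norm_num : (0:ℝ) ≤ 5)]
  norm_num

def Apoly : Polynomial ℂ := C (1/108) * X^5 + C (-5/216)*X^4 + C (-25/216)*X^3
    + C (5/48)*X^2 + C (35/64)*X + C (49/128)

def dB : Polynomial ℂ := C (-(21/2) - 9/2*rt) * X^2 + C (45/2 + 21/2*rt) * X
    + C (291/8 + 111/8*rt)

def alA (z : ℂ) : ℂ := 35/64 + (25/216)*pf z + (1/108)*(pf z)^2 + (5/48)*sf z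
    + (5/108)*sf z*pf z - (25/216)*(sf z)^2 - (1/36)*(sf z)^2*pf z - (5/216)*(sf z)^3
    + (1/108)*(sf z)^4

def beA (z : ℂ) : ℂ := 49/128 - (5/48)*pf z - (5/216)*(pf z)^2 + (25/216)*sf z*pf z
    + (1/54)*sf z*(pf z)^2 + (5/216)*(sf z)^2*pf z - (1/108)*(sf z)^3*pf z

def gB (z : ℂ) : ℂ := (45/2 + 21/2*rt) + (-(21/2) - 9/2*rt)*sf z
def dBB (z : ℂ) : ℂ := (291/8 + 111/8*rt) - (-(21/2) - 9/2*rt)*pf z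
def dQ3f (z : ℂ) : ℂ := 3*(47/2 + 21/2*rt)*z^2 - 2*(195/2 + 87/2*rt)*z
    + (255/2 + 111/2*rt) - 3*z⁻¹^4

lemma redA (z : ℂ) : aeval (Mz z) Apoly = alA z • Mz z + beA z • 1 := by
  have m2 := Mpow 2 z
  have m3 := Mpow 3 z
  have m4 := Mpow 4 z
  have m5 := Mpow 5 z
  simp only [Apoly, map_add, _root_.map_mul, map_pow, aeval_C, aeval_X,
    Algebra.algebraMap_eq_smul_one]
  rw [m5, m4, m3, m2]
  simp only [af, bf, ab, alA, beA]
  ext i j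
  fin_cases i <;> fin_cases j <;>
    simp [Mz, Matrix.smul_apply, Matrix.add_apply, Matrix.one_apply, smul_eq_mul, Matrix.add_mul, Matrix.smul_mul, Matrix.mul_apply, Fin.sum_univ_two] <;>
    ring

lemma redB (z : ℂ) : aeval (Mz z) dB = gB z • Mz z + dBB z • 1 := by
  have m2 := Mpow 2 z
  simp only [dB, map_add, _root_.map_mul, map_pow, aeval_C, aeval_X,
    Algebra.algebraMap_eq_smul_one]
  rw [m2]
  simp only [af, bf, ab, gB, dBB]
  ext i j
  fin_cases i <;> fin_cases j <;>
    simp [Mz, Matrix.smul_apply, Matrix.add_apply, Matrix.one_apply, smul_eq_mul, Matrix.add_mul, Matrix.smul_mul, Matrix.mul_apply, Fin.sum_univ_two] <;>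
    ring

lemma alA_eq {z : ℂ} (hz : z ≠ 0) : alA z = 0 := by
  have hw : z * z⁻¹ = 1 := mul_inv_cancel₀ hz
  have hr : (Real.sqrt 5 : ℂ)^2 = 5 := rs5
  simp only [alA, sf, pf, rt]
  linear_combination ((-29/108:ℂ) + (5/27:ℂ)*z⁻¹ + (-1/18:ℂ)*z⁻¹*(Real.sqrt 5:ℂ) + (-5/108:ℂ)*z⁻¹^2 + (1/36:ℂ)*z⁻¹^2*(Real.sqrt 5:ℂ) + (5/27:ℂ)*z + (1/18:ℂ)*z*(Real.sqrt 5:ℂ) + (-1/108:ℂ)*z*z⁻¹ + (-5/108:ℂ)*z^2 + (-1/36:ℂ)*z^2*(Real.sqrt 5:ℂ)) * hw + ((1/108:ℂ)*z⁻¹^2 + (-1/108:ℂ)*z⁻¹^3 + (1/432:ℂ)*z⁻¹^4 + (-1/54:ℂ)*z*z⁻¹ + (1/108:ℂ)*z*z⁻¹^2 + (1/108:ℂ)*z^2 + (1/108:ℂ)*z^2*z⁻¹ + (-1/216:ℂ)*z^2*z⁻¹^2 + (-1/108:ℂ)*z^3 + (1/432:ℂ)*z^4) * hr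

lemma beA_eq {z : ℂ} (hz : z ≠ 0) : beA z = Lfun z := by
  have hw : z * z⁻¹ = 1 := mul_inv_cancel₀ hz
  have hr : (Real.sqrt 5 : ℂ)^2 = 5 := rs5
  simp only [beA, sf, pf, rt, Lfun, div_eq_mul_inv, ← inv_pow]
  linear_combination ((-103/216:ℂ) + (8/27:ℂ)*z⁻¹ + (-5/108:ℂ)*z⁻¹*(Real.sqrt 5:ℂ) + (55/216:ℂ)*z⁻¹^2 + (-19/216:ℂ)*z⁻¹^2*(Real.sqrt 5:ℂ) + (-25/54:ℂ)*z⁻¹^3 + (7/36:ℂ)*z⁻¹^3*(Real.sqrt 5:ℂ) + (55/216:ℂ)*z⁻¹^4 + (-25/216:ℂ)*z⁻¹^4*(Real.sqrt 5:ℂ) + (8/27:ℂ)*z + (5/108:ℂ)*z*(Real.sqrt 5:ℂ) + (-7/24:ℂ)*z*z⁻¹ + (2/27:ℂ)*z*z⁻¹^2 + (1/108:ℂ)*z*z⁻¹^2*(Real.sqrt 5:ℂ) + (10/27:ℂ)*z*z⁻¹^3 + (-5/36:ℂ)*z*z⁻¹^3*(Real.sqrt 5:ℂ) + (-35/72:ℂ)*z*z⁻¹^4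 + (5/24:ℂ)*z*z⁻¹^4*(Real.sqrt 5:ℂ) + (55/216:ℂ)*z^2 + (19/216:ℂ)*z^2*(Real.sqrt 5:ℂ) + (2/27:ℂ)*z^2*z⁻¹ + (-1/108:ℂ)*z^2*z⁻¹*(Real.sqrt 5:ℂ) + (-13/36:ℂ)*z^2*z⁻¹^2 + (5/54:ℂ)*z^2*z⁻¹^3 + (10/27:ℂ)*z^2*z⁻¹^4 + (-5/36:ℂ)*z^2*z⁻¹^4*(Real.sqrt 5:ℂ) + (-25/54:ℂ)*z^3 + (-7/36:ℂ)*z^3*(Real.sqrt 5:ℂ) + (10/27:ℂ)*z^3*z⁻¹ + (5/36:ℂ)*z^3*z⁻¹*(Real.sqrt 5:ℂ) + (5/54:ℂ)*z^3*z⁻¹^2 + (-13/36:ℂ)*z^3*z⁻¹^3 + (5/54:ℂ)*z^3*z⁻¹^4 + (55/216:ℂ)*z^4 + (25/216:ℂ)*z^4*(Real.sqrt 5:ℂ) + (-35/72:ℂ)*z^4*z⁻¹ + (-5/24:ℂ)*z^4*z⁻¹*(Real.sqrt 5:ℂ) + (10/27:ℂ)*z^4*z⁻¹^2 + (5/36:ℂ)*z^4*z⁻¹^2*(Real.sqrt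 5:ℂ) + (5/54:ℂ)*z^4*z⁻¹^3 + (-13/36:ℂ)*z^4*z⁻¹^4 + (-11/216:ℂ)*z^5 + (-5/216:ℂ)*z^5*(Real.sqrt 5:ℂ) + (55/216:ℂ)*z^5*z⁻¹ + (25/216:ℂ)*z^5*z⁻¹*(Real.sqrt 5:ℂ) + (-35/72:ℂ)*z^5*z⁻¹^2 + (-5/24:ℂ)*z^5*z⁻¹^2*(Real.sqrt 5:ℂ) + (10/27:ℂ)*z^5*z⁻¹^3 + (5/36:ℂ)*z^5*z⁻¹^3*(Real.sqrt 5:ℂ) + (5/54:ℂ)*z^5*z⁻¹^4 + (-11/216:ℂ)*z^6*z⁻¹ + (-5/216:ℂ)*z^6*z⁻¹*(Real.sqrt 5:ℂ) + (55/216:ℂ)*z^6*z⁻¹^2 + (25/216:ℂ)*z^6*z⁻¹^2*(Real.sqrt 5:ℂ) + (-35/72:ℂ)*z^6*z⁻¹^3 + (-5/24:ℂ)*z^6*z⁻¹^3*(Real.sqrt 5:ℂ) + (10/27:ℂ)*z^6*z⁻¹^4 + (5/36:ℂ)*z^6*z⁻¹^4*(Real.sqrt 5:ℂ) + (-11/216:ℂ)*z^7*z⁻¹^2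 + (-5/216:ℂ)*z^7*z⁻¹^2*(Real.sqrt 5:ℂ) + (55/216:ℂ)*z^7*z⁻¹^3 + (25/216:ℂ)*z^7*z⁻¹^3*(Real.sqrt 5:ℂ) + (-35/72:ℂ)*z^7*z⁻¹^4 + (-5/24:ℂ)*z^7*z⁻¹^4*(Real.sqrt 5:ℂ) + (-11/216:ℂ)*z^8*z⁻¹^3 + (-5/216:ℂ)*z^8*z⁻¹^3*(Real.sqrt 5:ℂ) + (55/216:ℂ)*z^8*z⁻¹^4 + (25/216:ℂ)*z^8*z⁻¹^4*(Real.sqrt 5:ℂ) + (-11/216:ℂ)*z^9*z⁻¹^4 + (-5/216:ℂ)*z^9*z⁻¹^4*(Real.sqrt 5:ℂ)) * hw + ((-5/216:ℂ)*z⁻¹^2 + (1/24:ℂ)*z⁻¹^3 + (-7/288:ℂ)*z⁻¹^4 + (-145/1152:ℂ)*z⁻¹^5 + (421/3456:ℂ)*z⁻¹^5*(Real.sqrt 5:ℂ) + (-137/3456:ℂ)*z⁻¹^5*(Real.sqrt 5:ℂ)^2 + (5/1152:ℂ)*z⁻¹^5*(Real.sqrt 5:ℂ)^3 + (5/108:ℂ)*z*z⁻¹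 + (-1/24:ℂ)*z*z⁻¹^2 + (1/216:ℂ)*z*z⁻¹^4 + (979/1728:ℂ)*z*z⁻¹^5 + (-1021/1728:ℂ)*z*z⁻¹^5*(Real.sqrt 5:ℂ) + (371/1728:ℂ)*z*z⁻¹^5*(Real.sqrt 5:ℂ)^2 + (-5/192:ℂ)*z*z⁻¹^5*(Real.sqrt 5:ℂ)^3 + (-5/216:ℂ)*z^2 + (-1/24:ℂ)*z^2*z⁻¹ + (7/144:ℂ)*z^2*z⁻¹^2 + (-1/108:ℂ)*z^2*z⁻¹^3 + (-871/1152:ℂ)*z^2*z⁻¹^5 + (1177/1152:ℂ)*z^2*z⁻¹^5*(Real.sqrt 5:ℂ) + (-175/384:ℂ)*z^2*z⁻¹^5*(Real.sqrt 5:ℂ)^2 + (25/384:ℂ)*z^2*z⁻¹^5*(Real.sqrt 5:ℂ)^3 + (1/24:ℂ)*z^3 + (-1/108:ℂ)*z^3*z⁻¹^2 + (-23/432:ℂ)*z^3*z⁻¹^5 + (-235/432:ℂ)*z^3*z⁻¹^5*(Real.sqrt 5:ℂ) + (385/864:ℂ)*z^3*z⁻¹^5*(Real.sqrt 5:ℂ)^2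 + (-25/288:ℂ)*z^3*z⁻¹^5*(Real.sqrt 5:ℂ)^3 + (-7/288:ℂ)*z^4 + (1/216:ℂ)*z^4*z⁻¹ + (3155/3456:ℂ)*z^4*z⁻¹^5 + (-1565/3456:ℂ)*z^4*z⁻¹^5*(Real.sqrt 5:ℂ) + (-455/3456:ℂ)*z^4*z⁻¹^5*(Real.sqrt 5:ℂ)^2 + (25/384:ℂ)*z^4*z⁻¹^5*(Real.sqrt 5:ℂ)^3 + (1/216:ℂ)*z^5 + (-299/576:ℂ)*z^5*z⁻¹^5 + (389/576:ℂ)*z^5*z⁻¹^5*(Real.sqrt 5:ℂ) + (-7/64:ℂ)*z^5*z⁻¹^5*(Real.sqrt 5:ℂ)^2 + (-5/192:ℂ)*z^5*z⁻¹^5*(Real.sqrt 5:ℂ)^3 + (-1003/3456:ℂ)*z^6*z⁻¹^5 + (-683/3456:ℂ)*z^6*z⁻¹^5*(Real.sqrt 5:ℂ) + (343/3456:ℂ)*z^6*z⁻¹^5*(Real.sqrt 5:ℂ)^2 + (5/1152:ℂ)*z^6*z⁻¹^5*(Real.sqrt 5:ℂ)^3 + (317/864:ℂ)*z^7*z⁻¹^5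 + (-59/864:ℂ)*z^7*z⁻¹^5*(Real.sqrt 5:ℂ) + (-5/216:ℂ)*z^7*z⁻¹^5*(Real.sqrt 5:ℂ)^2 + (-7/72:ℂ)*z^8*z⁻¹^5 + (5/144:ℂ)*z^8*z⁻¹^5*(Real.sqrt 5:ℂ)) * hr

lemma keyB {z : ℂ} (hz : z ≠ 0) : dBB z * dsf z + gB z * ef z = dQ3f z := by
  have hw : z * z⁻¹ = 1 := mul_inv_cancel₀ hz
  have hr : (Real.sqrt 5 : ℂ)^2 = 5 := rs5
  simp only [dBB, gB, dQ3f, dsf, ef, sf, pf, dpf, rt]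
  linear_combination ((33/2:ℂ) + (15/2:ℂ)*(Real.sqrt 5:ℂ) + (30:ℂ)*z⁻¹ + (12:ℂ)*z⁻¹*(Real.sqrt 5:ℂ) + (12:ℂ)*z⁻¹^2 + (6:ℂ)*z⁻¹^2*(Real.sqrt 5:ℂ) + (-33/2:ℂ)*z*z⁻¹ + (-15/2:ℂ)*z*z⁻¹*(Real.sqrt 5:ℂ)) * hw + ((21/2:ℂ) + (33/4:ℂ)*z⁻¹^2 + (-39/2:ℂ)*z⁻¹^3 + (27/4:ℂ)*z⁻¹^4 + (-39/2:ℂ)*z + (9/2:ℂ)*z*z⁻¹ + (9/2:ℂ)*z*z⁻¹^3 + (27/4:ℂ)*z^2 + (-9/4:ℂ)*z^2*z⁻¹^2) * hr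

lemma keyA {z : ℂ} (hz : z ≠ 0) : aeval (Mz z) Apoly = Lfun z • 1 := by
  rw [redA z, alA_eq hz, beA_eq hz, zero_smul, zero_add]

lemma derivQ3 {z : ℂ} (hz : z ≠ 0) : HasDerivAt Q3fun (dQ3f z) z := by
  have h3 := hasDerivAt_pow 3 z
  have h2 := hasDerivAt_pow 2 z
  have h1 : HasDerivAt (fun w : ℂ => w) 1 z := hasDerivAt_id z
  have hinv := h3.inv (pow_ne_zero 3 hz)
  have h := (((h3.const_mul ((47:ℂ)/2 + 21/2*(Real.sqrt 5:ℂ))).sub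
      (h2.const_mul ((195:ℂ)/2 + 87/2*(Real.sqrt 5:ℂ)))).add
      (h1.const_mul ((255:ℂ)/2 + 111/2*(Real.sqrt 5:ℂ)))).add hinv
  have hfun : Q3fun = fun z : ℂ => ((47:ℂ)/2 + 21/2*(Real.sqrt 5:ℂ)) * z^3
      - ((195:ℂ)/2 + 87/2*(Real.sqrt 5:ℂ)) * z^2
      + ((255:ℂ)/2 + 111/2*(Real.sqrt 5:ℂ)) * z + (z^3)⁻¹ := rfl
  rw [hfun]
  refine h.congr_deriv (Eq.symm ?_)
  unfold dQ3f rt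
  field_simp
  ring

lemma final_ident (i : ℕ) {z : ℂ} (hz : z ≠ 0) :
    HasDerivAt (TrP (pint (Apoly ^ i * dB))) (Lfun z ^ i * deriv Q3fun z) z := by
  have H := TrP_hasDeriv (pint (Apoly ^ i * dB)) hz
  rw [derivative_pint] at H
  have e1 : aeval (Mz z) (Apoly ^ i * dB) = Lfun z ^ i • aeval (Mz z) dB := by
    rw [_root_.map_mul, map_pow, keyA hz, _root_.smul_pow, one_pow, smul_mul_assoc, one_mul]
  rw [e1, redB z] at H
  have e2 : (Lfun z ^ i • (gB z • Mz z + dBB z • 1)) 0 0 * dsf z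
      + (Lfun z ^ i • (gB z • Mz z + dBB z • 1)) 1 0 * ef z
      = Lfun z ^ i * deriv Q3fun z := by
    rw [(derivQ3 hz).deriv]
    have c00 : (Lfun z ^ i • (gB z • Mz z + dBB z • 1)) 0 0
        = Lfun z ^ i * dBB z := by
      simp [Mz, Matrix.smul_apply, Matrix.add_apply, Matrix.one_apply, smul_eq_mul]
    have c10 : (Lfun z ^ i • (gB z • Mz z + dBB z • 1)) 1 0
        = Lfun z ^ i * gB z := by
      simp [Mz, Matrix.smul_apply, Matrix.add_apply, Matrix.one_apply, smul_eq_mul]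
    rw [c00, c10, ← keyB hz]
    ring
  rw [e2] at H
  exact H

end S3aux

/-- `∮_{S¹} L(z)^i Q_3'(z) dz = 0` for all integers `i ≥ 0`. -/
theorem stmt3 (i : ℕ) : (∮ z in C(0, 1), (Lfun z) ^ i * deriv Q3fun z) = 0 := by
  apply circleIntegral.integral_eq_zero_of_hasDerivWithinAt
    (f := S3aux.TrP (S3aux.pint (S3aux.Apoly ^ i * S3aux.dB))) zero_le_one
  intro z hzs
  have hz : z ≠ 0 := by
    rw [Metric.mem_sphere, dist_zero_right] at hzs
    intro h
    rw [h] at hzs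
    simp at hzs
  exact (S3aux.final_ident i hz).hasDerivWithinAt
end
end

section
/- In the symmetric group on the 10 symbols {1,...,10}, consider the permutations φ = (1 2 3 4 5)(6 7 8 9 10), α = (1 5)(2 8)(4 7), and σ = (2 5 7 6 10 9)(3 8 4). Then σ · α · φ = 1 (the identity permutation), and the subgroup of S_{10} generated by σ and α is isomorphic as a group to the symmetric group S_5 (in particular it has order 120). -/
/-- The permutation `φ = (1 2 3 4 5)(6 7 8 9 10)` of `{1,…,10}`, written on
`Fin 10` (symbol `i` corresponds to index `i-1`). -/
def permPhi : Equiv.Perm (Fin 10) :=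
  List.formPerm [(0 : Fin 10), 1, 2, 3, 4] * List.formPerm [(5 : Fin 10), 6, 7, 8, 9]

/-- The permutation `α = (1 5)(2 8)(4 7)` of `{1,…,10}`, written on `Fin 10`. -/
def permAlpha : Equiv.Perm (Fin 10) :=
  Equiv.swap 0 4 * Equiv.swap 1 7 * Equiv.swap 3 6

/-- The permutation `σ = (2 5 7 6 10 9)(3 8 4)` of `{1,…,10}`, written on `Fin 10`. -/
def permSigma : Equiv.Perm (Fin 10) :=
  List.formPerm [(1 : Fin 10), 4, 6, 5, 9, 8] * List.formPerm [(2 : Fin 10), 7, 3]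

open Equiv

/- We realize `⟨σ, α⟩` as the image of the injective homomorphism `S₅ → S₁₀`
coming from the action of `S₅` on the ten 2-element subsets of `{1,…,5}`.
The point `i : Fin 10` encodes the pair `{pairFst i, pairSnd i}`. -/

def pairFst : Fin 10 → Fin 5 := ![0,0,2,3,1,1,0,2,1,0]
def pairSnd : Fin 10 → Fin 5 := ![1,2,3,4,4,2,3,4,3,4]
def pairCode : Fin 5 → Fin 5 → Fin 10 := fun x y =>
  ![![0,0,1,6,9],![0,0,5,8,4],![1,5,0,2,7],![6,8,2,0,3],![9,4,7,3,0]] x y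

lemma code_spec : ∀ x y : Fin 5, x ≠ y →
    (pairFst (pairCode x y) = x ∧ pairSnd (pairCode x y) = y) ∨
    (pairFst (pairCode x y) = y ∧ pairSnd (pairCode x y) = x) := by decide
lemma code_symm : ∀ x y : Fin 5, pairCode x y = pairCode y x := by decide
lemma pair_ne : ∀ i : Fin 10, pairFst i ≠ pairSnd i := by decide
lemma code_pair : ∀ i : Fin 10, pairCode (pairFst i) (pairSnd i) = i := by decide

def fAux (π : Perm (Fin 5)) : Fin 10 → Fin 10 := fun i => pairCode (π (pairFst i)) (π (pairSnd i))

lemma fAux_fAux (π τ : Perm (Fin 5)) (i : Fin 10) : fAux π (fAux τ i) = fAux (π * τ) i := by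
  unfold fAux
  rcases code_spec _ _ (fun h => pair_ne i (τ.injective h)) with ⟨h1, h2⟩ | ⟨h1, h2⟩ <;>
    rw [h1, h2] <;> simp [Perm.mul_apply, code_symm]

lemma fAux_one (i : Fin 10) : fAux 1 i = i := by simp [fAux, code_pair]

/-- The action of `S₅` on unordered pairs, as a homomorphism `S₅ →* S₁₀`. -/
def fHom : Perm (Fin 5) →* Perm (Fin 10) where
  toFun π := ⟨fAux π, fAux π⁻¹,
    fun i => by rw [fAux_fAux, inv_mul_cancel, fAux_one],
    fun i => by rw [fAux_fAux, mul_inv_cancel, fAux_one]⟩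
  map_one' := Equiv.ext fun i => fAux_one i
  map_mul' π τ := Equiv.ext fun i => (fAux_fAux π τ i).symm

def pSig : Perm (Fin 5) := ⟨![1,0,4,2,3], ![1,0,3,4,2], by decide, by decide⟩
def pAlp : Perm (Fin 5) := Equiv.swap 0 4

lemma hsig : fHom pSig = permSigma := by decide
lemma halp : fHom pAlp = permAlpha := by decide

set_option maxHeartbeats 2000000 in
set_option maxRecDepth 10000 in
lemma hker : ∀ π : Perm (Fin 5), (∀ i : Fin 10, fAux π i = i) → ∀ x, π x = x := by decide

lemma hinj : Function.Injective fHom := by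
  refine (injective_iff_map_eq_one fHom).2 fun π h => Equiv.ext fun x => hker π (fun i => ?_) x
  exact congrFun (congrArg (fun (e : Perm (Fin 10)) => (e : Fin 10 → Fin 10)) h) i

lemma hword1 : finRotate 5 = pSig * pSig * pAlp * (pSig * pSig * pSig) := by decide
lemma hword2 : Equiv.swap (0 : Fin 5) (finRotate 5 0) = pSig * pSig * pSig := by decide

lemma htop : Subgroup.closure {pSig, pAlp} = ⊤ := by
  rw [eq_top_iff, ← Equiv.Perm.closure_cycle_adjacent_swap isCycle_finRotate support_finRotate 0,
    Subgroup.closure_le]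
  have h1 : pSig ∈ Subgroup.closure {pSig, pAlp} :=
    Subgroup.subset_closure (Or.inl rfl)
  have h2 : pAlp ∈ Subgroup.closure {pSig, pAlp} :=
    Subgroup.subset_closure (Or.inr rfl)
  rintro x (rfl | rfl)
  · rw [hword1]; exact mul_mem (mul_mem (mul_mem h1 h1) h2) (mul_mem (mul_mem h1 h1) h1)
  · rw [hword2]; exact mul_mem (mul_mem h1 h1) h1

lemma hrange : fHom.range = Subgroup.closure {permSigma, permAlpha} := by
  rw [← hsig, ← halp, MonoidHom.range_eq_map, ← htop, MonoidHom.map_closure, Set.image_pair]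

noncomputable def theIso :
    (Subgroup.closure {permSigma, permAlpha} : Subgroup (Equiv.Perm (Fin 10)))
      ≃* Equiv.Perm (Fin 5) :=
  (MulEquiv.subgroupCongr hrange.symm).trans (MonoidHom.ofInjective hinj).symm

/-- `σ · α · φ = 1`, where the product is composition applied left to right
(`σ` first, then `α`, then `φ`, as customary for monodromy permutations), and the
subgroup of `S₁₀` generated by `σ` and `α` is isomorphic to `S₅`
(in particular it has order `120`). -/
theorem stmt9 :
    (permSigma.trans permAlpha).trans permPhi = Equiv.refl (Fin 10) ∧
    Nonempty ((Subgroup.closure {permSigma, permAlpha} : Subgroup (Equiv.Perm (Fin 10)))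
      ≃* Equiv.Perm (Fin 5)) ∧
    Nat.card (Subgroup.closure {permSigma, permAlpha} : Subgroup (Equiv.Perm (Fin 10))) = 120 := by
  refine ⟨by decide, ⟨theIso⟩, ?_⟩
  rw [Nat.card_congr theIso.toEquiv, Nat.card_eq_fintype_card, Fintype.card_perm]
  rfl
end

section
/- Work in ℝ (or ℂ) with √5 the positive square root of 5. Let K = (11+5√5)/216, a = (-3+√5)/2, b = (7-3√5)/2. For every z with z ≠ 0 and (2+√5)z - (2-√5) ≠ 0, setting x = (z-1)/((2+√5)z - (2-√5)), one has x^2 + 4x - 1 ≠ 0 and K (z-1)^6 (z-a)^3 (z-b) / z^5 = (50000/27) · x^6 (x-1)^3 (x+1) / (x^2+4x-1)^5. That is, the Laurent polynomial L(z) = K(z-1)^6(z-a)^3(z-b)/z^5 is obtained from the rational function F_1(x) = (50000/27) · x^6(x-1)^3(x+1)/(x^2+4x-1)^5 by the Möbius substitution x = (z-1)/((2+√5)z - (2-√5)), which sends the pole -2-√5 of F_1 to 0 and the pole -2+√5 to ∞. -/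
set_option maxHeartbeats 1000000


/-- The Laurent polynomial `L(z) = K (z-1)^6 (z-a)^3 (z-b) / z^5`, with
`K = (11+5√5)/216`, `a = (-3+√5)/2`, `b = (7-3√5)/2`, is obtained from the rational
function `F₁(x) = (50000/27) x^6 (x-1)^3 (x+1) / (x^2+4x-1)^5` by the Möbius
substitution `x = (z-1)/((2+√5)z - (2-√5))`: for every `z ≠ 0` with
`(2+√5)z - (2-√5) ≠ 0`, the point `x` satisfies `x^2 + 4x - 1 ≠ 0` and
`K (z-1)^6 (z-a)^3 (z-b) / z^5 = (50000/27) x^6 (x-1)^3 (x+1) / (x^2+4x-1)^5`. -/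
theorem stmt16 (K a b : ℝ)
    (hK : K = (11 + 5 * Real.sqrt 5) / 216)
    (ha : a = (-3 + Real.sqrt 5) / 2)
    (hb : b = (7 - 3 * Real.sqrt 5) / 2)
    (z : ℝ) (hz : z ≠ 0)
    (hz2 : (2 + Real.sqrt 5) * z - (2 - Real.sqrt 5) ≠ 0)
    (x : ℝ) (hx : x = (z - 1) / ((2 + Real.sqrt 5) * z - (2 - Real.sqrt 5))) :
    x ^ 2 + 4 * x - 1 ≠ 0 ∧
    K * (z - 1) ^ 6 * (z - a) ^ 3 * (z - b) / z ^ 5 =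
      (50000 / 27) * x ^ 6 * (x - 1) ^ 3 * (x + 1) / (x ^ 2 + 4 * x - 1) ^ 5 := by
  set s := Real.sqrt 5 with hsdef
  have hs : s ^ 2 = 5 := Real.sq_sqrt (by norm_num)
  set d := (2 + s) * z - (2 - s) with hd
  -- key identities
  have h1 : x ^ 2 + 4 * x - 1 = -20 * z / d ^ 2 := by
    rw [hx]
    field_simp
    linear_combination ((-1)*s^0*z^0 + (-2)*s^0*z^1 + (-1)*s^0*z^2) * hs
  have hd2 : d ^ 2 ≠ 0 := pow_ne_zero 2 hz2
  have hne : x ^ 2 + 4 * x - 1 ≠ 0 := by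
    rw [h1]
    intro h
    apply hz
    have := (div_eq_zero_iff.mp h).resolve_right hd2
    linarith
  refine ⟨hne, ?_⟩
  have h2 : x - 1 = -((1 + s) * (z - a)) / d := by
    rw [hx, ha]
    field_simp
    linear_combination (-1) * hs
  have h3 : x + 1 = (3 + s) * (z - b) / d := by
    rw [hx, hb]
    field_simp
    linear_combination (-3) * hs
  have hKc : K = (1 + s) ^ 3 * (3 + s) / 1728 := by
    rw [hK]
    linear_combination (-(s ^ 2 + 6 * s + 17) / 1728) * hs
  rw [h1, h2, h3, hx, hKc]
  clear_value d
  field_simp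
  ring
end
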